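/- arXiv:1912.01253 — 8 statements merged into one kernel-verified Lean document; each statement's English description precedes it below -/
import Mathlib

section
/- For every subset U of ℝ^n, the tropical convex hull of U equals the intersection over j = 0, 1, …, n of the Minkowski sums U + S_j; that is, tconv(U) = ⋂_{j=0}^{n} (U + S_j). -/
open Pointwise

/-- A set `U ⊆ ℝ^n` is tropically convex (min-plus convention). -/
def TropConvex {n : ℕ} (U : Set (Fin n → ℝ)) : Prop :=
  ∀ x ∈ U, ∀ y ∈ U, ∀ a b : ℝ, min a b = 0 →
    (fun i => min (a + x i) (b + y i)) ∈ U

/-- The tropical convex hull: the intersection of all tropically convex sets containing `U`. -/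
def tconv {n : ℕ} (U : Set (Fin n → ℝ)) : Set (Fin n → ℝ) :=
  ⋂₀ {V | TropConvex V ∧ U ⊆ V}

/-- The sectors `S_0, S_1, …, S_n` of `ℝ^n`, indexed by `j : Fin (n+1)`. -/
def sector {n : ℕ} (j : Fin (n + 1)) : Set (Fin n → ℝ) :=
  if _h : (j : ℕ) = 0 then {x | ∀ i, x i ≤ 0}
  else {x | 0 ≤ x ⟨(j : ℕ) - 1, by have := j.isLt; omega⟩ ∧
            ∀ i, x i ≤ x ⟨(j : ℕ) - 1, by have := j.isLt; omega⟩}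

lemma mem_sector_zero {n : ℕ} {j : Fin (n + 1)} (hj : (j : ℕ) = 0) {x : Fin n → ℝ} :
    x ∈ sector j ↔ ∀ i, x i ≤ 0 := by
  simp [sector, hj]

lemma mem_sector_pos {n : ℕ} {j : Fin (n + 1)} (hj : (j : ℕ) ≠ 0) {x : Fin n → ℝ} :
    x ∈ sector j ↔ 0 ≤ x ⟨(j : ℕ) - 1, by have := j.isLt; omega⟩ ∧
      ∀ i, x i ≤ x ⟨(j : ℕ) - 1, by have := j.isLt; omega⟩ := by
  simp [sector, hj]

lemma zero_mem_sector {n : ℕ} (j : Fin (n + 1)) : (0 : Fin n → ℝ) ∈ sector j := by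
  by_cases hj : (j : ℕ) = 0
  · rw [mem_sector_zero hj]; intro i; simp
  · rw [mem_sector_pos hj]; simp

lemma subset_add_sector {n : ℕ} (U : Set (Fin n → ℝ)) (j : Fin (n + 1)) :
    U ⊆ U + sector j := fun u hu => by
  rw [Set.mem_add]
  exact ⟨u, hu, 0, zero_mem_sector j, by simp⟩

lemma tropConvex_add_sector {n : ℕ} (U : Set (Fin n → ℝ)) (j : Fin (n + 1)) :
    TropConvex (U + sector j) := by
  intro x hx y hy a b hab
  obtain ⟨u, hu, s, hs, hus⟩ := Set.mem_add.mp hx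
  obtain ⟨v, hv, t, ht, hvt⟩ := Set.mem_add.mp hy
  have hxi : ∀ i, x i = u i + s i := fun i => (congrFun hus i).symm
  have hyi : ∀ i, y i = v i + t i := fun i => (congrFun hvt i).symm
  have ha : 0 ≤ a := hab ▸ min_le_left a b
  have hb : 0 ≤ b := hab ▸ min_le_right a b
  by_cases hj : (j : ℕ) = 0
  · -- sector 0
    have hab' : a = 0 ∨ b = 0 := by
      rcases le_total a b with h | h
      · left; rw [min_eq_left h] at hab; exact hab
      · right; rw [min_eq_right h] at hab; exact hab
    rw [mem_sector_zero hj] at hs ht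
    rw [Set.mem_add]
    rcases hab' with ha0 | hb0
    · refine ⟨u, hu, fun i => min (a + x i) (b + y i) - u i, ?_, by funext i; simp only [Pi.add_apply]; ring⟩
      rw [mem_sector_zero hj]
      intro i
      have h1 : min (a + x i) (b + y i) ≤ a + x i := min_le_left _ _
      have h2 := hs i
      have h3 := hxi i
      linarith
    · refine ⟨v, hv, fun i => min (a + x i) (b + y i) - v i, ?_, by funext i; simp only [Pi.add_apply]; ring⟩
      rw [mem_sector_zero hj]
      intro i
      have h1 : min (a + x i) (b + y i) ≤ b + y i := min_le_right _ _
      have h2 := ht i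
      have h3 := hyi i
      linarith
  · -- sector j, j ≥ 1, distinguished coordinate k
    rw [mem_sector_pos hj] at hs ht
    set k : Fin n := ⟨(j : ℕ) - 1, by have := j.isLt; omega⟩ with hk
    rw [Set.mem_add]
    rcases le_total (a + x k) (b + y k) with h | h
    · refine ⟨u, hu, fun i => min (a + x i) (b + y i) - u i, ?_, by funext i; simp only [Pi.add_apply]; ring⟩
      rw [mem_sector_pos hj]
      constructor
      · have : min (a + x k) (b + y k) = a + x k := min_eq_left h
        rw [this, hxi k]
        have := hs.1
        linarith
      · intro i
        have h1 : min (a + x i) (b + y i) ≤ a + x i := min_le_left _ _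
        have h2 : min (a + x k) (b + y k) = a + x k := min_eq_left h
        rw [h2]
        have h3 : s i ≤ s k := hs.2 i
        linarith [hxi i, hxi k]
    · refine ⟨v, hv, fun i => min (a + x i) (b + y i) - v i, ?_, by funext i; simp only [Pi.add_apply]; ring⟩
      rw [mem_sector_pos hj]
      constructor
      · have : min (a + x k) (b + y k) = b + y k := min_eq_right h
        rw [this, hyi k]
        have := ht.1
        linarith
      · intro i
        have h1 : min (a + x i) (b + y i) ≤ b + y i := min_le_right _ _
        have h2 : min (a + x k) (b + y k) = b + y k := min_eq_right h
        rw [h2]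
        have h3 : t i ≤ t k := ht.2 i
        linarith [hyi i, hyi k]

/-- Iterated min of `f 0, …, f m`. -/
def pmin (f : ℕ → ℝ) : ℕ → ℝ
  | 0 => f 0
  | m + 1 => min (pmin f m) (f (m + 1))

lemma pmin_le (f : ℕ → ℝ) : ∀ {m k : ℕ}, k ≤ m → pmin f m ≤ f k := by
  intro m
  induction m with
  | zero => intro k hk; interval_cases k; simp [pmin]
  | succ m ih =>
    intro k hk
    rcases Nat.lt_succ_iff_lt_or_eq.mp (Nat.lt_succ_of_le hk) with h | h
    · exact le_trans (min_le_left _ _) (ih (Nat.lt_succ_iff.mp h))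
    · subst h; exact min_le_right _ _

lemma le_pmin (f : ℕ → ℝ) {c : ℝ} : ∀ {m : ℕ}, (∀ k ≤ m, c ≤ f k) → c ≤ pmin f m := by
  intro m
  induction m with
  | zero => intro h; exact h 0 le_rfl
  | succ m ih =>
    intro h
    exact le_min (ih fun k hk => h k (Nat.le_succ_of_le hk)) (h (m + 1) le_rfl)

/-- A tropical combination with nonnegative coefficients, the first being zero,
belongs to any tropically convex set containing the points. -/
lemma comb_mem {n : ℕ} {V : Set (Fin n → ℝ)} (hV : TropConvex V)
    (u : ℕ → (Fin n → ℝ)) (lam : ℕ → ℝ) (h0 : lam 0 = 0) :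
    ∀ m : ℕ, (∀ k ≤ m, u k ∈ V) → (∀ k ≤ m, 0 ≤ lam k) →
      (fun i => pmin (fun k => lam k + u k i) m) ∈ V := by
  intro m
  induction m with
  | zero =>
    intro hu _
    have : (fun i => pmin (fun k => lam k + u k i) 0) = u 0 := by
      funext i; simp [pmin, h0]
    rw [this]; exact hu 0 le_rfl
  | succ m ih =>
    intro hu hlam
    have hmem := hV _ (ih (fun k hk => hu k (Nat.le_succ_of_le hk))
        (fun k hk => hlam k (Nat.le_succ_of_le hk)))
      _ (hu (m + 1) le_rfl) 0 (lam (m + 1)) (min_eq_left (hlam (m + 1) le_rfl))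
    have : (fun i => min (0 + pmin (fun k => lam k + u k i) m)
        (lam (m + 1) + u (m + 1) i)) =
        (fun i => pmin (fun k => lam k + u k i) (m + 1)) := by
      funext i; simp [pmin]
    rwa [this] at hmem

theorem tconv_eq_iInter_minkowski (n : ℕ) (U : Set (Fin n → ℝ)) :
    tconv U = ⋂ j : Fin (n + 1), (U + sector j) := by
  apply Set.Subset.antisymm
  · -- tconv U ⊆ ⋂ ...
    apply Set.subset_iInter
    intro j
    exact Set.sInter_subset_of_mem ⟨tropConvex_add_sector U j, subset_add_sector U j⟩
  · -- ⋂ ... ⊆ tconv U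
    intro x hx
    rw [Set.mem_iInter] at hx
    choose u hu s hs hust using fun j => Set.mem_add.mp (hx j)
    intro V hV
    obtain ⟨hVc, hVU⟩ := hV
    have hxeq : ∀ (j : Fin (n + 1)) (i : Fin n), x i = u j i + s j i :=
      fun j i => (congrFun (hust j) i).symm
    -- define the combination data
    set u' : ℕ → (Fin n → ℝ) := fun k =>
      if h : k ≤ n then u ⟨k, Nat.lt_succ_of_le h⟩ else x with hu'
    set lam : ℕ → ℝ := fun k =>
      if h : k ≤ n then
        (if h0 : k = 0 then 0
         else s ⟨k, Nat.lt_succ_of_le h⟩ ⟨k - 1, by omega⟩)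
      else 0 with hlam
    have hlam0 : lam 0 = 0 := by simp [hlam]
    have hlamnn : ∀ k ≤ n, 0 ≤ lam k := by
      intro k hk
      by_cases h0 : k = 0
      · simp [hlam, h0]
      · have hj : ((⟨k, Nat.lt_succ_of_le hk⟩ : Fin (n + 1)) : ℕ) ≠ 0 := h0
        have := ((mem_sector_pos hj).mp (hs ⟨k, Nat.lt_succ_of_le hk⟩)).1
        simp only [hlam, dif_pos hk, dif_neg h0]
        exact this
    have hu'mem : ∀ k ≤ n, u' k ∈ V := by
      intro k hk
      simp only [hu', dif_pos hk]
      exact hVU (hu _)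
    have key : x = (fun i => pmin (fun k => lam k + u' k i) n) := by
      funext i
      apply le_antisymm
      · apply le_pmin
        intro k hk
        by_cases h0 : k = 0
        · subst h0
          have e1 : lam 0 = 0 := hlam0
          have e2 : u' 0 = u 0 := by
            simp only [hu', dif_pos (Nat.zero_le n)]
            rfl
          rw [e1, e2, zero_add]
          have hj0 : (((0 : Fin (n + 1))) : ℕ) = 0 := rfl
          have h1 := (mem_sector_zero hj0).mp (hs 0) i
          have h2 := hxeq 0 i
          linarith
        · have hjlt : k < n + 1 := Nat.lt_succ_of_le hk
          have e1 : lam k = s ⟨k, hjlt⟩ ⟨k - 1, by omega⟩ := by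
            simp only [hlam, dif_pos hk, dif_neg h0]
          have e2 : u' k = u ⟨k, hjlt⟩ := by
            simp only [hu', dif_pos hk]
          rw [e1, e2]
          have hj : ((⟨k, hjlt⟩ : Fin (n + 1)) : ℕ) ≠ 0 := h0
          have hsj := (mem_sector_pos hj).mp (hs ⟨k, hjlt⟩)
          have hke : (⟨((⟨k, hjlt⟩ : Fin (n + 1)) : ℕ) - 1,
              by have := (⟨k, hjlt⟩ : Fin (n + 1)).isLt; omega⟩ : Fin n)
              = ⟨k - 1, by omega⟩ := rfl
          rw [hke] at hsj
          have h2 : s ⟨k, hjlt⟩ i ≤ s ⟨k, hjlt⟩ ⟨k - 1, by omega⟩ := hsj.2 i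
          have h3 := hxeq ⟨k, hjlt⟩ i
          linarith
      · have hk1 : (i : ℕ) + 1 ≤ n := i.isLt
        refine le_trans (pmin_le _ hk1) ?_
        have hjlt : (i : ℕ) + 1 < n + 1 := Nat.lt_succ_of_le hk1
        have e1 : lam ((i : ℕ) + 1) = s ⟨(i : ℕ) + 1, hjlt⟩ ⟨(i : ℕ) + 1 - 1, by omega⟩ := by
          simp only [hlam, dif_pos hk1, dif_neg (Nat.succ_ne_zero (i : ℕ))]
        have e2 : u' ((i : ℕ) + 1) = u ⟨(i : ℕ) + 1, hjlt⟩ := by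
          simp only [hu', dif_pos hk1]
        rw [e1, e2]
        have hie : (⟨(i : ℕ) + 1 - 1, by omega⟩ : Fin n) = i := by
          apply Fin.ext; simp
        rw [hie]
        have := hxeq ⟨(i : ℕ) + 1, hjlt⟩ i
        linarith
    rw [key]
    exact comb_mem hVc u' lam hlam0 n hu'mem hlamnn
end

section
/- If P ⊆ ℝ^n is convex (in the ordinary sense), then its tropical convex hull tconv(P) is convex. -/
lemma TropAux.inf'_add_const {α : Type*} (s : Finset α) (hs : s.Nonempty) (f : α → ℝ) (c : ℝ) :
    s.inf' hs (fun x => c + f x) = c + s.inf' hs f := by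
  obtain ⟨a, ha, hEq⟩ := s.exists_mem_eq_inf' hs f
  apply le_antisymm
  · calc s.inf' hs (fun x => c + f x) ≤ c + f a := Finset.inf'_le _ ha
    _ = c + s.inf' hs f := by rw [hEq]
  · exact Finset.le_inf' _ _ fun b hb => add_le_add (le_refl c) (Finset.inf'_le f hb)

lemma TropAux.inf'_combo {α β : Type*} (s : Finset α) (t : Finset β) (hs : s.Nonempty)
    (ht : t.Nonempty) (F : α → ℝ) (G : β → ℝ) (l m : ℝ) (hl : 0 ≤ l) (hm : 0 ≤ m) :
    (s ×ˢ t).inf' (hs.product ht) (fun pq => l * F pq.1 + m * G pq.2)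
      = l * s.inf' hs F + m * t.inf' ht G := by
  obtain ⟨a, ha, hEa⟩ := s.exists_mem_eq_inf' hs F
  obtain ⟨b, hb, hEb⟩ := t.exists_mem_eq_inf' ht G
  apply le_antisymm
  · calc (s ×ˢ t).inf' _ (fun pq => l * F pq.1 + m * G pq.2) ≤ l * F a + m * G b :=
        Finset.inf'_le _ (show (a,b) ∈ s ×ˢ t from Finset.mem_product.mpr ⟨ha, hb⟩)
    _ = _ := by rw [hEa, hEb]
  · refine Finset.le_inf' _ _ fun pq hpq => ?_
    obtain ⟨h1, h2⟩ := Finset.mem_product.mp hpq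
    exact add_le_add (mul_le_mul_of_nonneg_left (Finset.inf'_le F h1) hl)
      (mul_le_mul_of_nonneg_left (Finset.inf'_le G h2) hm)

/-- `z` is a finite tropical (min-plus) combination of points of `U`. -/
def IsTropComb {n : ℕ} (U : Set (Fin n → ℝ)) (z : Fin n → ℝ) : Prop :=
  ∃ s : Finset (ℝ × (Fin n → ℝ)), ∃ hs : s.Nonempty,
    (∀ pr ∈ s, pr.2 ∈ U) ∧ s.inf' hs Prod.fst = 0 ∧
      ∀ i, z i = s.inf' hs (fun pr => pr.1 + pr.2 i)

lemma subset_tropComb {n : ℕ} (U : Set (Fin n → ℝ)) : U ⊆ {z | IsTropComb U z} := by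
  intro x hx
  refine ⟨{((0 : ℝ), x)}, Finset.singleton_nonempty _, ?_, ?_, ?_⟩
  · simp [hx]
  · simp
  · intro i; simp

lemma tropConvex_tropComb {n : ℕ} (U : Set (Fin n → ℝ)) : TropConvex {z | IsTropComb U z} := by
  classical
  rintro x ⟨s, hs, hsU, hs0, hsx⟩ y ⟨t, ht, htU, ht0, hty⟩ a b hab
  refine ⟨s.image (fun pr => (a + pr.1, pr.2)) ∪ t.image (fun pr => (b + pr.1, pr.2)),
    Finset.Nonempty.inl (hs.image _), ?_, ?_, ?_⟩
  · intro pr hpr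
    rcases Finset.mem_union.mp hpr with h | h <;> obtain ⟨q, hq, rfl⟩ := Finset.mem_image.mp h
    · exact hsU q hq
    · exact htU q hq
  · rw [Finset.inf'_union (hs.image _) (ht.image _), Finset.inf'_image, Finset.inf'_image]
    show min (s.inf' hs fun pr => a + pr.1) (t.inf' ht fun pr => b + pr.1) = 0
    rw [TropAux.inf'_add_const s hs Prod.fst a, TropAux.inf'_add_const t ht Prod.fst b,
      hs0, ht0, add_zero, add_zero, hab]
  · intro i
    rw [Finset.inf'_union (hs.image _) (ht.image _), Finset.inf'_image, Finset.inf'_image]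
    show min (a + x i) (b + y i)
        = min (s.inf' hs fun pr => (a + pr.1) + pr.2 i) (t.inf' ht fun pr => (b + pr.1) + pr.2 i)
    have h1 : (s.inf' hs fun pr => (a + pr.1) + pr.2 i) = a + x i := by
      rw [hsx i]
      simpa [add_assoc] using TropAux.inf'_add_const s hs (fun pr => pr.1 + pr.2 i) a
    have h2 : (t.inf' ht fun pr => (b + pr.1) + pr.2 i) = b + y i := by
      rw [hty i]
      simpa [add_assoc] using TropAux.inf'_add_const t ht (fun pr => pr.1 + pr.2 i) b
    rw [h1, h2]

lemma tropComb_subset {n : ℕ} (U V : Set (Fin n → ℝ)) (hV : TropConvex V) (hUV : U ⊆ V) :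
    {z | IsTropComb U z} ⊆ V := by
  classical
  suffices H : ∀ m : ℕ, ∀ s : Finset (ℝ × (Fin n → ℝ)), s.card = m → ∀ hs : s.Nonempty,
      (∀ pr ∈ s, pr.2 ∈ U) → s.inf' hs Prod.fst = 0 →
      ∀ z : Fin n → ℝ, (∀ i, z i = s.inf' hs (fun pr => pr.1 + pr.2 i)) → z ∈ V by
    rintro z ⟨s, hs, h1, h2, h3⟩
    exact H s.card s rfl hs h1 h2 z h3
  intro m
  induction m using Nat.strong_induction_on with
  | _ m ih =>
    intro s hcard hs hU h0 z hz
    obtain ⟨pr, hpr⟩ := hs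
    by_cases hone : s = {pr}
    · subst hone
      have hz' : z = pr.2 := by
        funext i
        have := hz i
        simp only [Finset.inf'_singleton] at this h0
        rw [this, h0, zero_add]
      rw [hz']
      exact hUV (hU pr (Finset.mem_singleton_self pr))
    · -- s has at least two elements
      have hs' : (s.erase pr).Nonempty := by
        rw [Finset.erase_nonempty hpr]
        exact (Finset.nontrivial_iff_ne_singleton hpr).mpr hone
      set s' := s.erase pr with hs'def
      set c : ℝ := s'.inf' hs' Prod.fst with hc
      set w : Fin n → ℝ := fun i => s'.inf' hs' (fun q => (q.1 - c) + q.2 i) with hw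
      -- w ∈ V by induction, using the shifted finset
      have hwV : w ∈ V := by
        have himg : (s'.image (fun q => (q.1 - c, q.2))).Nonempty := hs'.image _
        refine ih (s'.image (fun q => (q.1 - c, q.2))).card ?_ _ rfl himg ?_ ?_ w (fun i => ?_)
        · calc (s'.image (fun q => (q.1 - c, q.2))).card ≤ s'.card := Finset.card_image_le
          _ < s.card := Finset.card_erase_lt_of_mem hpr
          _ = m := hcard
        · intro q hq
          obtain ⟨q', hq', rfl⟩ := Finset.mem_image.mp hq
          exact hU q' (Finset.mem_of_mem_erase hq')
        · rw [Finset.inf'_image]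
          show s'.inf' hs' (fun q => q.1 - c) = 0
          have : s'.inf' hs' (fun q => q.1 - c) = s'.inf' hs' (fun q => (-c) + q.1) :=
            Finset.inf'_congr hs' rfl fun q _ => by ring
          rw [this, TropAux.inf'_add_const s' hs' Prod.fst (-c), ← hc]
          ring
        · rw [Finset.inf'_image]
          rfl
      -- the inf over s splits off the element pr
      have hsplit : ∀ f : ℝ × (Fin n → ℝ) → ℝ,
          s.inf' ⟨pr, hpr⟩ f = min (f pr) (s'.inf' hs' f) := by
        intro f
        apply le_antisymm
        · apply le_min (Finset.inf'_le f hpr)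
          exact Finset.le_inf' _ _ fun q hq => Finset.inf'_le f (Finset.mem_of_mem_erase hq)
        · refine Finset.le_inf' _ _ fun q hq => ?_
          by_cases hqpr : q = pr
          · subst hqpr; exact min_le_left _ _
          · exact le_trans (min_le_right _ _)
              (Finset.inf'_le f (Finset.mem_erase.mpr ⟨hqpr, hq⟩))
      have hmin : min pr.1 c = 0 := by rw [← hsplit Prod.fst]; exact h0
      have hzw : z = fun i => min (pr.1 + pr.2 i) (c + w i) := by
        funext i
        rw [hz i, hsplit (fun q => q.1 + q.2 i)]
        congr 1
        show (s'.inf' hs' fun q => q.1 + q.2 i)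
            = c + s'.inf' hs' (fun q => q.1 - c + q.2 i)
        rw [← TropAux.inf'_add_const s' hs' (fun q => q.1 - c + q.2 i) c]
        exact Finset.inf'_congr hs' rfl fun q _ => by ring
      rw [hzw]
      exact hV pr.2 (hUV (hU pr hpr)) w hwV pr.1 c hmin

lemma tconv_eq_tropComb {n : ℕ} (U : Set (Fin n → ℝ)) : tconv U = {z | IsTropComb U z} := by
  apply le_antisymm
  · exact Set.sInter_subset_of_mem ⟨tropConvex_tropComb U, subset_tropComb U⟩
  · intro z hz
    intro V hV
    exact tropComb_subset U V hV.1 hV.2 hz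

theorem convex_tconv_of_convex (n : ℕ) (P : Set (Fin n → ℝ)) (hP : Convex ℝ P) :
    Convex ℝ (tconv P) := by
  classical
  rw [tconv_eq_tropComb]
  rintro x ⟨s, hs, hsU, hs0, hsx⟩ y ⟨t, ht, htU, ht0, hty⟩ l m hl hm hlm
  refine ⟨(s ×ˢ t).image (fun pq => (l * pq.1.1 + m * pq.2.1, l • pq.1.2 + m • pq.2.2)),
    ((hs.product ht).image _), ?_, ?_, ?_⟩
  · intro pr hpr
    obtain ⟨pq, hpq, rfl⟩ := Finset.mem_image.mp hpr
    obtain ⟨h1, h2⟩ := Finset.mem_product.mp hpq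
    exact hP (hsU _ h1) (htU _ h2) hl hm hlm
  · rw [Finset.inf'_image]
    show (s ×ˢ t).inf' (hs.product ht) (fun pq => l * pq.1.1 + m * pq.2.1) = 0
    rw [TropAux.inf'_combo s t hs ht Prod.fst Prod.fst l m hl hm, hs0, ht0]
    ring
  · intro i
    rw [Finset.inf'_image]
    show (l • x + m • y) i
        = (s ×ˢ t).inf' (hs.product ht)
            (fun pq => (l * pq.1.1 + m * pq.2.1) + (l • pq.1.2 + m • pq.2.2) i)
    have : ∀ pq : (ℝ × (Fin n → ℝ)) × (ℝ × (Fin n → ℝ)),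
        (l * pq.1.1 + m * pq.2.1) + (l • pq.1.2 + m • pq.2.2) i
          = l * (pq.1.1 + pq.1.2 i) + m * (pq.2.1 + pq.2.2 i) := by
      intro pq
      simp only [Pi.add_apply, Pi.smul_apply, smul_eq_mul]
      ring
    rw [Finset.inf'_congr (hs.product ht) rfl (fun pq _ => this pq),
      TropAux.inf'_combo s t hs ht (fun pr => pr.1 + pr.2 i) (fun pr => pr.1 + pr.2 i) l m hl hm,
      ← hsx i, ← hty i]
    simp [smul_eq_mul]
end

section
/- For every subset U of ℝ^n, tconv(convexHull(U)) = tconv(convexHull(tconv(U))); i.e., repeatedly taking ordinary convex hull and tropical convex hull stabilizes after one step. -/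
inductive TGen {n : ℕ} (S : Set (Fin n → ℝ)) : (Fin n → ℝ) → Prop
  | base {x} : x ∈ S → TGen S x
  | step {x y : Fin n → ℝ} {a b : ℝ} : TGen S x → TGen S y → min a b = 0 →
      TGen S (fun i => min (a + x i) (b + y i))

lemma subset_tconv {n : ℕ} (S : Set (Fin n → ℝ)) : S ⊆ tconv S :=
  fun _ hx => Set.mem_sInter.mpr fun _ hV => hV.2 hx

lemma tconv_le {n : ℕ} {S V : Set (Fin n → ℝ)} (h1 : TropConvex V) (h2 : S ⊆ V) :
    tconv S ⊆ V := fun _ hz => Set.mem_sInter.mp hz V ⟨h1, h2⟩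

lemma tropConvex_tconv {n : ℕ} (S : Set (Fin n → ℝ)) : TropConvex (tconv S) := by
  intro x hx y hy a b hab
  refine Set.mem_sInter.mpr fun V hV => ?_
  exact hV.1 _ (Set.mem_sInter.mp hx V hV) _ (Set.mem_sInter.mp hy V hV) _ _ hab

lemma tconv_mono {n : ℕ} {S T : Set (Fin n → ℝ)} (h : S ⊆ T) : tconv S ⊆ tconv T :=
  tconv_le (tropConvex_tconv T) (h.trans (subset_tconv T))

lemma tconv_eq_TGen {n : ℕ} (S : Set (Fin n → ℝ)) : tconv S = {z | TGen S z} := by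
  apply Set.Subset.antisymm
  · exact tconv_le (fun x hx y hy a b hab => TGen.step hx hy hab) (fun x hx => TGen.base hx)
  · intro z hz
    refine Set.mem_sInter.mpr fun V hV => ?_
    induction hz with
    | base h => exact hV.2 h
    | step hx hy hab ihx ihy => exact hV.1 _ ihx _ ihy _ _ hab

lemma TGen_comb {n : ℕ} {S : Set (Fin n → ℝ)} (hS : Convex ℝ S) {t s : ℝ}
    (ht : 0 ≤ t) (hs : 0 ≤ s) (hts : t + s = 1) :
    ∀ {z : Fin n → ℝ}, TGen S z → ∀ {w : Fin n → ℝ}, TGen S w → TGen S (t • z + s • w) := by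
  intro z hz
  induction hz with
  | @base x hx =>
    intro w hw
    induction hw with
    | @base y hy => exact TGen.base (hS hx hy ht hs hts)
    | @step y1 y2 a b h1 h2 hab ih1 ih2 =>
      have key : (t • x + s • fun i => min (a + y1 i) (b + y2 i)) =
          fun i => min (s * a + (t • x + s • y1) i) (s * b + (t • x + s • y2) i) := by
        funext i
        simp only [Pi.add_apply, Pi.smul_apply, smul_eq_mul]
        rcases le_total (a + y1 i) (b + y2 i) with h | h
        · rw [min_eq_left h, min_eq_left (by nlinarith [mul_le_mul_of_nonneg_left h hs])]; ring
        · rw [min_eq_right h, min_eq_right (by nlinarith [mul_le_mul_of_nonneg_left h hs])]; ring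
      rw [key]
      exact TGen.step ih1 ih2 (by rw [← mul_min_of_nonneg _ _ hs, hab, mul_zero])
  | @step z1 z2 a b h1 h2 hab ih1 ih2 =>
    intro w hw
    have key : (t • (fun i => min (a + z1 i) (b + z2 i)) + s • w) =
        fun i => min (t * a + (t • z1 + s • w) i) (t * b + (t • z2 + s • w) i) := by
      funext i
      simp only [Pi.add_apply, Pi.smul_apply, smul_eq_mul]
      rcases le_total (a + z1 i) (b + z2 i) with h | h
      · rw [min_eq_left h, min_eq_left (by nlinarith [mul_le_mul_of_nonneg_left h ht])]; ring
      · rw [min_eq_right h, min_eq_right (by nlinarith [mul_le_mul_of_nonneg_left h ht])]; ring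
    rw [key]
    exact TGen.step (ih1 hw) (ih2 hw) (by rw [← mul_min_of_nonneg _ _ ht, hab, mul_zero])

lemma convex_tconv {n : ℕ} {S : Set (Fin n → ℝ)} (hS : Convex ℝ S) : Convex ℝ (tconv S) := by
  rw [tconv_eq_TGen]
  intro z hz w hw t s ht hs hts
  exact TGen_comb hS ht hs hts hz hw

theorem tconv_convexHull_stabilizes (n : ℕ) (U : Set (Fin n → ℝ)) :
    tconv (convexHull ℝ U) = tconv (convexHull ℝ (tconv U)) := by
  apply Set.Subset.antisymm
  · exact tconv_mono (convexHull_mono (subset_tconv U))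
  · refine tconv_le (tropConvex_tconv _) ?_
    refine convexHull_min ?_ (convex_tconv (convex_convexHull ℝ U))
    exact tconv_mono (subset_convexHull ℝ U)
end

section
/- If a, b ∈ ℝ^n and V is a finite subset of the ordinary line segment between a and b, then tconv(V) ⊆ convexHull(tconv({a, b})). -/
/-- Auxiliary class of "good" functions: monotone, 1-Lipschitz (increments), concave,
vanishing at 0. -/
structure IsGood (g : ℝ → ℝ) : Prop where
  zero : g 0 = 0
  mono : Monotone g
  lip : ∀ p q : ℝ, p ≤ q → g q - g p ≤ q - p
  conc : ∀ p q r : ℝ, p ≤ q → q ≤ r → (g r - g q) * (q - p) ≤ (g q - g p) * (r - q)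

lemma hinge_mem {n : ℕ} (a b : Fin n → ℝ) (r : ℝ) :
    (fun i => min (max r 0 + a i) (max (-r) 0 + b i)) ∈ tconv {a, b} := by
  intro W hW
  obtain ⟨hWt, hab⟩ := hW
  have ha : a ∈ W := hab (by simp)
  have hb : b ∈ W := hab (by simp)
  have hmin : min (max r 0) (max (-r) 0) = 0 := by
    rcases le_total r 0 with h | h
    · rw [max_eq_right h, min_eq_left (le_max_right _ _)]
    · rw [max_eq_right (neg_nonpos.2 h), min_eq_right (le_max_right _ _)]
  exact hWt a ha b hb _ _ hmin

lemma hinge_coord (A B r : ℝ) :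
    min (max r 0 + A) (max (-r) 0 + B) = A + (min r (B - A) - min r 0) := by
  rcases le_total r 0 with h | h
  · rw [max_eq_right h, max_eq_left (neg_nonneg.2 h), min_eq_left h, zero_add]
    rcases le_total r (B - A) with h2 | h2
    · rw [min_eq_left h2, min_eq_left (by linarith : A ≤ -r + B)]; ring
    · rw [min_eq_right h2, min_eq_right (by linarith : -r + B ≤ A)]; ring
  · rw [max_eq_left h, max_eq_right (neg_nonpos.2 h), min_eq_right h, zero_add]
    rcases le_total r (B - A) with h2 | h2
    · rw [min_eq_left h2, min_eq_left (by linarith : r + A ≤ B)]; ring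
    · rw [min_eq_right h2, min_eq_right (by linarith : B ≤ r + A)]; ring

lemma good_mem_convexHull {n : ℕ} (a b : Fin n → ℝ) (g : ℝ → ℝ) (hg : IsGood g)
    (x : Fin n → ℝ) (hx : ∀ i, x i = a i + g (b i - a i)) :
    x ∈ convexHull ℝ (tconv {a, b}) := by
  classical
  set d : Fin n → ℝ := fun i => b i - a i with hd
  set D : Finset ℝ := insert 0 (Finset.image d Finset.univ) with hD
  set N : ℕ := D.card with hN
  have hNpos : 0 < N := Finset.card_pos.2 ⟨0, Finset.mem_insert_self _ _⟩
  let e := D.orderIsoOfFin rfl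
  set s : ℕ → ℝ := fun k => if h : k < N then (e ⟨k, h⟩ : ℝ) else 0 with hs
  have hs_lt : ∀ {k l : ℕ}, k < l → l < N → s k < s l := by
    intro k l hkl hl
    have hk : k < N := hkl.trans hl
    simp only [hs, dif_pos hk, dif_pos hl]
    exact Subtype.coe_lt_coe.2 (e.strictMono (show (⟨k, hk⟩ : Fin N) < ⟨l, hl⟩ from hkl))
  have hs_le : ∀ {k l : ℕ}, k ≤ l → l < N → s k ≤ s l := by
    intro k l hkl hl
    rcases eq_or_lt_of_le hkl with rfl | h
    · exact le_rfl
    · exact (hs_lt h hl).le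
  have hs_surj : ∀ y, y ∈ D → ∃ k, ∃ hk : k < N, s k = y := by
    intro y hy
    refine ⟨(e.symm ⟨y, hy⟩ : Fin N).1, (e.symm ⟨y, hy⟩).2, ?_⟩
    simp only [hs, dif_pos (e.symm ⟨y, hy⟩).2]
    split_ifs with h
    · simp
    · exact absurd (e.symm ⟨y, hy⟩).2 h
  obtain ⟨j0, hj0, hsj0⟩ := hs_surj 0 (Finset.mem_insert_self _ _)
  set m : ℕ → ℝ := fun k =>
    if k = 0 then 1 else if k < N then (g (s k) - g (s (k-1))) / (s k - s (k-1)) else 0 with hm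
  have hm0 : m 0 = 1 := by simp [hm]
  have hmN : ∀ k, N ≤ k → m k = 0 := by
    intro k hk
    have hk0 : k ≠ 0 := by omega
    simp [hm, hk0, not_lt.2 hk]
  have hΔpos : ∀ k, k + 1 < N → 0 < s (k+1) - s k :=
    fun k h => sub_pos.2 (hs_lt (Nat.lt_succ_self k) h)
  have hmsucc : ∀ k, k + 1 < N → m (k+1) = (g (s (k+1)) - g (s k)) / (s (k+1) - s k) := by
    intro k h
    simp [hm, h]
  have hslope : ∀ k, k + 1 < N → m (k+1) * (s (k+1) - s k) = g (s (k+1)) - g (s k) := by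
    intro k h
    rw [hmsucc k h, div_mul_cancel₀]
    exact (hΔpos k h).ne'
  have hm_nonneg : ∀ k, 0 ≤ m k := by
    intro k
    rcases Nat.eq_zero_or_pos k with rfl | hk
    · rw [hm0]; norm_num
    by_cases hkN : k < N
    · obtain ⟨l, rfl⟩ : ∃ l, k = l + 1 := ⟨k - 1, by omega⟩
      rw [hmsucc l hkN]
      exact div_nonneg (sub_nonneg.2 (hg.mono (hs_lt (Nat.lt_succ_self l) hkN).le))
        (hΔpos l hkN).le
    · rw [hmN k (by omega)]
  have hm_le_one : ∀ k, m k ≤ 1 := by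
    intro k
    rcases Nat.eq_zero_or_pos k with rfl | hk
    · rw [hm0]
    by_cases hkN : k < N
    · obtain ⟨l, rfl⟩ : ∃ l, k = l + 1 := ⟨k - 1, by omega⟩
      rw [hmsucc l hkN]
      rw [div_le_one (hΔpos l hkN)]
      exact hg.lip _ _ (hs_lt (Nat.lt_succ_self l) hkN).le
    · rw [hmN k (by omega)]; norm_num
  have hm_anti : ∀ k, m (k+1) ≤ m k := by
    intro k
    by_cases hN2 : k + 1 < N
    · rcases Nat.eq_zero_or_pos k with rfl | hk
      · rw [hm0]; exact hm_le_one 1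
      obtain ⟨l, rfl⟩ : ∃ l, k = l + 1 := ⟨k - 1, by omega⟩
      rw [hmsucc (l+1) hN2, hmsucc l (by omega)]
      rw [div_le_div_iff₀ (hΔpos (l+1) hN2) (hΔpos l (by omega))]
      have h1 : s l ≤ s (l+1) := (hs_lt (Nat.lt_succ_self l) (by omega)).le
      have h2 : s (l+1) ≤ s (l+2) := (hs_lt (Nat.lt_succ_self (l+1)) hN2).le
      have := hg.conc (s l) (s (l+1)) (s (l+2)) h1 h2
      linarith
    · rw [hmN (k+1) (by omega)]
      exact hm_nonneg k
  set w : ℕ → ℝ := fun k => m k - m (k+1) with hw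
  have hw_nonneg : ∀ k, 0 ≤ w k := fun k => sub_nonneg.2 (hm_anti k)
  have hw_sum : ∑ k ∈ Finset.range N, w k = 1 := by
    rw [hw]
    rw [Finset.sum_range_sub' m]
    rw [hm0, hmN N le_rfl, sub_zero]
  set u : ℕ → Fin n → ℝ := fun k i => min (max (s k) 0 + a i) (max (-(s k)) 0 + b i) with hu
  have hu_mem : ∀ k, u k ∈ tconv {a, b} := fun k => hinge_mem a b (s k)
  have hmin_s : ∀ k l : ℕ, k < N → l < N → min (s k) (s l) = s (min k l) := by
    intro k l hk hl
    rcases le_total k l with h | h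
    · rw [min_eq_left h, min_eq_left (hs_le h hl)]
    · rw [min_eq_right h, min_eq_right (hs_le h hk)]
  have key : ∀ i, ∑ k ∈ Finset.range N, w k * u k i = x i := by
    intro i
    have hdD : d i ∈ D := Finset.mem_insert_of_mem (Finset.mem_image_of_mem d (Finset.mem_univ i))
    obtain ⟨j, hj, hsj⟩ := hs_surj (d i) hdD
    set v : ℕ → ℝ := fun k => s (min k j) - s (min k j0) with hv
    have hu_eq : ∀ k, k < N → u k i = a i + v k := by
      intro k hk
      show min (max (s k) 0 + a i) (max (-(s k)) 0 + b i) = a i + v k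
      rw [hinge_coord (a i) (b i) (s k)]
      have hba : b i - a i = d i := rfl
      rw [hba, ← hsj, ← hsj0, hmin_s k j hk hj, hmin_s k j0 hk hj0]
    have hstep : ∀ jj, jj < N → ∀ k : ℕ,
        m (k+1) * (s (min (k+1) jj) - s (min k jj)) = g (s (min (k+1) jj)) - g (s (min k jj)) := by
      intro jj hjj k
      rcases lt_or_ge k jj with hk | hk
      · rw [min_eq_left (by omega : k + 1 ≤ jj), min_eq_left (by omega : k ≤ jj)]
        exact hslope k (by omega)
      · rw [min_eq_right (by omega : jj ≤ k + 1), min_eq_right hk]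
        simp
    set F : ℕ → ℝ := fun k => g (s (min k j)) - g (s (min k j0)) - m k * v k with hF
    have hterm : ∀ k, w k * v k = F (k+1) - F k := by
      intro k
      have h1 := hstep j hj k
      have h2 := hstep j0 hj0 k
      simp only [hF, hv, hw]
      linear_combination h1 - h2
    have hsum1 : ∑ k ∈ Finset.range N, w k * v k = F N - F 0 := by
      rw [show (∑ k ∈ Finset.range N, w k * v k) = ∑ k ∈ Finset.range N, (F (k+1) - F k) from
        Finset.sum_congr rfl fun k _ => hterm k]
      exact Finset.sum_range_sub F N
    have hFN : F N = g (d i) := by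
      simp only [hF]
      rw [min_eq_right hj.le, min_eq_right hj0.le, hmN N le_rfl, hsj, hsj0, hg.zero]
      ring
    have hF0 : F 0 = 0 := by
      simp only [hF, hv, Nat.zero_min, hm0]
      ring
    calc ∑ k ∈ Finset.range N, w k * u k i
        = ∑ k ∈ Finset.range N, (w k * a i + w k * v k) := by
          refine Finset.sum_congr rfl fun k hk => ?_
          rw [hu_eq k (Finset.mem_range.1 hk), mul_add]
      _ = (∑ k ∈ Finset.range N, w k) * a i + ∑ k ∈ Finset.range N, w k * v k := by
          rw [Finset.sum_add_distrib, Finset.sum_mul]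
      _ = a i + g (d i) := by rw [hw_sum, hsum1, hFN, hF0, one_mul, sub_zero]
      _ = x i := (hx i).symm
  have hxsum : x = ∑ k ∈ Finset.range N, w k • u k := by
    funext i
    rw [Finset.sum_apply]
    simp only [Pi.smul_apply, smul_eq_mul]
    exact (key i).symm
  rw [hxsum]
  exact (convex_convexHull ℝ _).sum_mem (fun k _ => hw_nonneg k) hw_sum
    (fun k _ => subset_convexHull ℝ _ (hu_mem k))

theorem tconv_finite_subset_segment (n : ℕ) (a b : Fin n → ℝ)
    (V : Set (Fin n → ℝ)) (hVfin : V.Finite) (hV : V ⊆ segment ℝ a b) :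
    tconv V ⊆ convexHull ℝ (tconv {a, b}) := by
  intro x hx
  have hxW : x ∈ {y : Fin n → ℝ | ∃ g : ℝ → ℝ, IsGood g ∧ ∀ i, y i = a i + g (b i - a i)} := by
    refine hx _ ⟨?_, ?_⟩
    · -- tropical convexity of the class
      rintro y ⟨g₁, hg₁, hy⟩ z ⟨g₂, hg₂, hz⟩ α β hαβ
      refine ⟨fun t => min (α + g₁ t) (β + g₂ t), ⟨?_, ?_, ?_, ?_⟩, ?_⟩
      · rw [hg₁.zero, hg₂.zero, add_zero, add_zero, hαβ]
      · intro p q hpq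
        exact min_le_min (add_le_add_right (hg₁.mono hpq) _) (add_le_add_right (hg₂.mono hpq) _)
      · intro p q hpq
        rcases le_total (α + g₁ p) (β + g₂ p) with hc | hc
        · rw [min_eq_left hc]
          have h1 := min_le_left (α + g₁ q) (β + g₂ q)
          have h2 := hg₁.lip p q hpq
          linarith
        · rw [min_eq_right hc]
          have h1 := min_le_right (α + g₁ q) (β + g₂ q)
          have h2 := hg₂.lip p q hpq
          linarith
      · intro p q r hpq hqr
        rcases le_total (α + g₁ q) (β + g₂ q) with hc | hc
        · have hq : min (α + g₁ q) (β + g₂ q) = α + g₁ q := min_eq_left hc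
          have hr := min_le_left (α + g₁ r) (β + g₂ r)
          have hp := min_le_left (α + g₁ p) (β + g₂ p)
          have c1 := hg₁.conc p q r hpq hqr
          have t1 : (min (α + g₁ r) (β + g₂ r) - min (α + g₁ q) (β + g₂ q)) * (q - p)
              ≤ (g₁ r - g₁ q) * (q - p) :=
            mul_le_mul_of_nonneg_right (by rw [hq]; linarith) (by linarith)
          have t2 : (g₁ q - g₁ p) * (r - q)
              ≤ (min (α + g₁ q) (β + g₂ q) - min (α + g₁ p) (β + g₂ p)) * (r - q) :=
            mul_le_mul_of_nonneg_right (by rw [hq]; linarith) (by linarith)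
          linarith
        · have hq : min (α + g₁ q) (β + g₂ q) = β + g₂ q := min_eq_right hc
          have hr := min_le_right (α + g₁ r) (β + g₂ r)
          have hp := min_le_right (α + g₁ p) (β + g₂ p)
          have c1 := hg₂.conc p q r hpq hqr
          have t1 : (min (α + g₁ r) (β + g₂ r) - min (α + g₁ q) (β + g₂ q)) * (q - p)
              ≤ (g₂ r - g₂ q) * (q - p) :=
            mul_le_mul_of_nonneg_right (by rw [hq]; linarith) (by linarith)
          have t2 : (g₂ q - g₂ p) * (r - q)
              ≤ (min (α + g₁ q) (β + g₂ q) - min (α + g₁ p) (β + g₂ p)) * (r - q) :=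
            mul_le_mul_of_nonneg_right (by rw [hq]; linarith) (by linarith)
          linarith
      · intro i
        show min (α + y i) (β + z i) = _
        rw [hy i, hz i]
        rw [show α + (a i + g₁ (b i - a i)) = a i + (α + g₁ (b i - a i)) by ring,
          show β + (a i + g₂ (b i - a i)) = a i + (β + g₂ (b i - a i)) by ring,
          min_add_add_left]
    · -- V is contained in the class
      intro y hy
      obtain ⟨p, t, hp, ht, hpt, hy'⟩ := hV hy
      have ht1 : t ≤ 1 := by linarith
      refine ⟨fun s => t * s, ⟨mul_zero t, ?_, ?_, ?_⟩, ?_⟩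
      · intro p' q' h
        exact mul_le_mul_of_nonneg_left h ht
      · intro p' q' h
        nlinarith
      · intro p' q' r' h1 h2
        have : (t * r' - t * q') * (q' - p') = (t * q' - t * p') * (r' - q') := by ring
        linarith
      · intro i
        have := congrFun hy' i
        simp only [Pi.add_apply, Pi.smul_apply, smul_eq_mul] at this
        have hp1 : p = 1 - t := by linarith
        rw [hp1] at this
        show y i = a i + t * (b i - a i)
        linear_combination -this
  obtain ⟨g, hg, hxg⟩ := hxW
  exact good_mem_convexHull a b g hg x hxg
end

section
/- For all points a, b ∈ ℝ^n, the tropical convex hull of the ordinary line segment between a and b equals the ordinary convex hull of the tropical convex hull of {a, b}; that is, tconv(segment ℝ a b) = convexHull(tconv({a, b})). -/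
namespace TropAux

lemma subset_tconv {n : ℕ} (U : Set (Fin n → ℝ)) : U ⊆ tconv U := by
  intro x hx V hV
  exact hV.2 hx

lemma tconv_subset {n : ℕ} {U V : Set (Fin n → ℝ)} (hV : TropConvex V) (hUV : U ⊆ V) :
    tconv U ⊆ V :=
  Set.sInter_subset_of_mem ⟨hV, hUV⟩

lemma tropConvex_tconv {n : ℕ} (U : Set (Fin n → ℝ)) : TropConvex (tconv U) := by
  intro x hx y hy α β hmin V hV
  exact hV.1 x (hx V hV) y (hy V hV) α β hmin

lemma const_add_inf' {ι : Type*} {s : Finset ι} (hs : s.Nonempty) (γ : ℝ) (h : ι → ℝ) :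
    s.inf' hs (fun k => γ + h k) = γ + s.inf' hs h := by
  apply le_antisymm
  · obtain ⟨k, hk, hk2⟩ := Finset.exists_mem_eq_inf' hs h
    rw [hk2]
    exact Finset.inf'_le _ hk
  · exact Finset.le_inf' _ _ fun b hb => by
      have := Finset.inf'_le h hb
      linarith

/-- finite tropical combinations stay in a tropically convex set -/
lemma tropcomb {n : ℕ} {V : Set (Fin n → ℝ)} (hV : TropConvex V) {ι : Type*}
    {s : Finset ι} (hs : s.Nonempty) (c : ι → ℝ) (u : ι → Fin n → ℝ)
    (hu : ∀ k ∈ s, u k ∈ V) (hc : s.inf' hs c = 0) :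
    (fun i => s.inf' hs fun k => c k + u k i) ∈ V := by
  induction hs using Finset.Nonempty.cons_induction generalizing c with
  | singleton a =>
      simp only [Finset.inf'_singleton] at hc ⊢
      have : (fun i => c a + u a i) = u a := by funext i; rw [hc]; ring
      rw [this]
      exact hu a (Finset.mem_singleton_self a)
  | cons a s h hs IH =>
      have hu' : ∀ k ∈ s, u k ∈ V := fun k hk => hu k (Finset.mem_cons_of_mem hk)
      have hua : u a ∈ V := hu a (by simp)
      rw [Finset.inf'_cons hs] at hc
      set γ := s.inf' hs c with hγ
      have hmin : min (c a) γ = 0 := hc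
      have hz : (fun i => s.inf' hs fun k => (c k - γ) + u k i) ∈ V := by
        apply IH _ hu'
        have h1 : s.inf' hs (fun k => (-γ) + c k) = (-γ) + s.inf' hs c :=
          const_add_inf' hs (-γ) c
        have : (fun k => c k - γ) = fun k => (-γ) + c k := by funext k; ring
        rw [this, h1]
        ring
      have key : (fun i => (Finset.cons a s h).inf' (Finset.cons_nonempty h)
          fun k => c k + u k i)
          = fun i => min (c a + u a i)
              (γ + (fun j => s.inf' hs fun k => (c k - γ) + u k j) i) := by
        funext i
        rw [Finset.inf'_cons hs]
        congr 1
        rw [← const_add_inf' hs γ (fun k => (c k - γ) + u k i)]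
        congr 1
        funext k
        ring
      rw [key]
      have := hV _ hua _ hz (c a) γ hmin
      exact this


/-- Functions with everywhere supporting lines of slope in `[-1,0]`, vanishing at `0`. -/
def SuppProp (f : ℝ → ℝ) : Prop :=
  f 0 = 0 ∧ ∀ p : ℝ, ∃ σ : ℝ, -1 ≤ σ ∧ σ ≤ 0 ∧ ∀ q : ℝ, f q ≤ f p + σ * (q - p)

def Sset {n : ℕ} (a b : Fin n → ℝ) : Set (Fin n → ℝ) :=
  {x | ∃ f : ℝ → ℝ, SuppProp f ∧ ∀ i, x i = a i + f (a i - b i)}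

lemma tropConvex_Sset {n : ℕ} (a b : Fin n → ℝ) : TropConvex (Sset a b) := by
  rintro x ⟨f, ⟨hf0, hfs⟩, hfx⟩ y ⟨g, ⟨hg0, hgs⟩, hgy⟩ α β hmin
  refine ⟨fun δ => min (α + f δ) (β + g δ), ⟨show min (α + f 0) (β + g 0) = 0 by rw [hf0, hg0]; simpa using hmin, ?_⟩, ?_⟩
  · intro p
    rcases le_total (α + f p) (β + g p) with hle | hle
    · obtain ⟨σ, h1, h2, h3⟩ := hfs p
      exact ⟨σ, h1, h2, fun q => by
        have := h3 q
        have hm : min (α + f p) (β + g p) = α + f p := min_eq_left hle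
        show min (α + f q) (β + g q) ≤ min (α + f p) (β + g p) + σ * (q - p)
        rw [hm]
        exact le_trans (min_le_left _ _) (by linarith)⟩
    · obtain ⟨σ, h1, h2, h3⟩ := hgs p
      exact ⟨σ, h1, h2, fun q => by
        have := h3 q
        have hm : min (α + f p) (β + g p) = β + g p := min_eq_right hle
        show min (α + f q) (β + g q) ≤ min (α + f p) (β + g p) + σ * (q - p)
        rw [hm]
        exact le_trans (min_le_right _ _) (by linarith)⟩
  · intro i
    show min (α + x i) (β + y i) = a i + min (α + f (a i - b i)) (β + g (a i - b i))
    rw [hfx i, hgy i]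
    simp only [min_def]
    split <;> split <;> linarith

lemma segment_subset_Sset {n : ℕ} (a b : Fin n → ℝ) : segment ℝ a b ⊆ Sset a b := by
  rintro x ⟨u, v, hu, hv, huv, rfl⟩
  refine ⟨fun δ => -v * δ, ⟨by show -v * 0 = 0; ring, fun p =>
    ⟨-v, by linarith, by linarith,
      fun q => le_of_eq (show -v * q = -v * p + -v * (q - p) by ring)⟩⟩, fun i => ?_⟩
  have hx : (u • a + v • b) i = u * a i + v * b i := rfl
  show (u • a + v • b) i = a i + -v * (a i - b i)
  rw [hx]
  have hu1 : u = 1 - v := by linarith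
  rw [hu1]; ring

lemma pair_subset_Sset {n : ℕ} (a b : Fin n → ℝ) : ({a, b} : Set (Fin n → ℝ)) ⊆ Sset a b := by
  rintro x (rfl | rfl)
  · exact ⟨fun _ => 0, ⟨rfl, fun p => ⟨0, by norm_num, le_refl _,
      fun q => by show (0:ℝ) ≤ 0 + 0 * (q - p); norm_num⟩⟩,
      fun i => by show x i = x i + 0; ring⟩
  · exact ⟨fun δ => -δ, ⟨neg_zero, fun p => ⟨-1, le_refl _, by norm_num,
      fun q => le_of_eq (show -q = -p + -1 * (q - p) by ring)⟩⟩,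
      fun i => by show x i = a i + -(a i - x i); ring⟩

lemma convex_Sset {n : ℕ} (a b : Fin n → ℝ) : Convex ℝ (Sset a b) := by
  rintro x ⟨f, ⟨hf0, hfs⟩, hfx⟩ y ⟨g, ⟨hg0, hgs⟩, hgy⟩ u v hu hv huv
  refine ⟨fun δ => u * f δ + v * g δ,
    ⟨show u * f 0 + v * g 0 = 0 by rw [hf0, hg0]; ring, ?_⟩, ?_⟩
  · intro p
    obtain ⟨σ, h1, h2, h3⟩ := hfs p
    obtain ⟨τ, k1, k2, k3⟩ := hgs p
    have e1 : u * (-1) ≤ u * σ := mul_le_mul_of_nonneg_left h1 hu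
    have e2 : v * (-1) ≤ v * τ := mul_le_mul_of_nonneg_left k1 hv
    have e3 : u * σ ≤ u * 0 := mul_le_mul_of_nonneg_left h2 hu
    have e4 : v * τ ≤ v * 0 := mul_le_mul_of_nonneg_left k2 hv
    refine ⟨u * σ + v * τ, by nlinarith, by nlinarith, fun q => ?_⟩
    have e5 : u * f q ≤ u * (f p + σ * (q - p)) := mul_le_mul_of_nonneg_left (h3 q) hu
    have e6 : v * g q ≤ v * (g p + τ * (q - p)) := mul_le_mul_of_nonneg_left (k3 q) hv
    show u * f q + v * g q ≤ (u * f p + v * g p) + (u * σ + v * τ) * (q - p)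
    nlinarith
  · intro i
    show (u • x + v • y) i = a i + (u * f (a i - b i) + v * g (a i - b i))
    have hx : (u • x + v • y) i = u * x i + v * y i := rfl
    rw [hx, hfx i, hgy i]
    have hu1 : u = 1 - v := by linarith
    rw [hu1]; ring

lemma Sset_subset_tconv_segment {n : ℕ} (a b : Fin n → ℝ) :
    Sset a b ⊆ tconv (segment ℝ a b) := by
  rintro x ⟨f, ⟨hf0, hfs⟩, hfx⟩
  classical
  -- the grid points where we take supporting lines
  set p : Option (Fin n) → ℝ := fun k => Option.elim k 0 (fun i => a i - b i) with hp
  choose σ hσ1 hσ2 hσ3 using hfs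
  set c : Option (Fin n) → ℝ := fun k => f (p k) - σ (p k) * p k with hc
  set u : Option (Fin n) → (Fin n → ℝ) := fun k => fun i => a i + σ (p k) * (a i - b i) with huu
  have husg : ∀ k, u k ∈ segment ℝ a b := by
    intro k
    refine ⟨1 + σ (p k), -σ (p k), by linarith [hσ1 (p k)], by linarith [hσ2 (p k)],
      by ring, ?_⟩
    funext i
    show (1 + σ (p k)) * a i + (-σ (p k)) * b i = a i + σ (p k) * (a i - b i)
    ring
  have hcnone : c none = 0 := by
    simp only [hc, hp, Option.elim]
    rw [hf0]; ring
  have hcnonneg : ∀ k, 0 ≤ c k := by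
    intro k
    have := hσ3 (p k) 0
    rw [hf0] at this
    simp only [hc]
    linarith
  have hne : (Finset.univ : Finset (Option (Fin n))).Nonempty := ⟨none, Finset.mem_univ _⟩
  have hinf : Finset.univ.inf' hne c = 0 := by
    apply le_antisymm
    · rw [← hcnone]; exact Finset.inf'_le _ (Finset.mem_univ _)
    · exact Finset.le_inf' _ _ fun k _ => hcnonneg k
  have hxeq : x = fun i => Finset.univ.inf' hne fun k => c k + u k i := by
    funext i
    apply le_antisymm
    · rw [hfx i]
      refine Finset.le_inf' _ _ fun k _ => ?_
      have := hσ3 (p k) (a i - b i)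
      simp only [hc, huu]
      linarith
    · have hle : Finset.univ.inf' hne (fun k => c k + u k i) ≤ c (some i) + u (some i) i :=
        Finset.inf'_le _ (Finset.mem_univ _)
      rw [hfx i]
      refine hle.trans (le_of_eq ?_)
      simp only [hc, huu, hp, Option.elim]
      ring
  rw [hxeq]
  exact tropcomb (tropConvex_tconv _) hne c u
    (fun k _ => subset_tconv _ (husg k)) hinf

lemma Sset_subset_convexHull {n : ℕ} (a b : Fin n → ℝ) :
    Sset a b ⊆ convexHull ℝ (tconv ({a, b} : Set (Fin n → ℝ))) := by
  classical
  rintro x ⟨f, ⟨hf0, hfs⟩, hfx⟩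
  set d : Fin n → ℝ := fun i => a i - b i with hd
  set D : Finset ℝ := insert 0 (Finset.image d Finset.univ) with hD
  have h0D : (0:ℝ) ∈ D := Finset.mem_insert_self _ _
  have hdD : ∀ i, d i ∈ D := fun i =>
    Finset.mem_insert_of_mem (Finset.mem_image_of_mem d (Finset.mem_univ i))
  set m : ℕ := D.card with hm
  have hm0 : 0 < m := Finset.card_pos.mpr ⟨0, h0D⟩
  set e := D.orderIsoOfFin rfl with he
  set q : Fin m → ℝ := fun k => (e k : ℝ) with hq
  have hqmono : StrictMono q := fun k l h => by
    exact_mod_cast e.strictMono h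
  have hqsurj : ∀ r ∈ D, ∃ k : Fin m, q k = r := by
    intro r hr
    exact ⟨e.symm ⟨r, hr⟩, by simp [hq]⟩
  -- chord slopes, padded with -1 beyond the grid
  set σ : ℕ → ℝ := fun k =>
    if h : k + 1 < m then
      (f (q ⟨k+1, h⟩) - f (q ⟨k, Nat.lt_of_succ_lt h⟩)) /
        (q ⟨k+1, h⟩ - q ⟨k, Nat.lt_of_succ_lt h⟩)
    else -1 with hσ
  have hgap : ∀ k (h : k + 1 < m),
      0 < q ⟨k+1, h⟩ - q ⟨k, Nat.lt_of_succ_lt h⟩ := by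
    intro k h
    have : (⟨k, Nat.lt_of_succ_lt h⟩ : Fin m) < ⟨k+1, h⟩ := by
      simp [Fin.lt_def]
    linarith [hqmono this]
  have hσub : ∀ k, σ k ≤ 0 := by
    intro k
    simp only [hσ]
    split
    · rename_i h
      obtain ⟨σ', h1, h2, h3⟩ := hfs (q ⟨k, Nat.lt_of_succ_lt h⟩)
      have hΔ := hgap k h
      have := h3 (q ⟨k+1, h⟩)
      apply div_nonpos_of_nonpos_of_nonneg _ (le_of_lt hΔ)
      nlinarith
    · norm_num
  have hσlb : ∀ k, -1 ≤ σ k := by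
    intro k
    simp only [hσ]
    split
    · rename_i h
      obtain ⟨σ', h1, h2, h3⟩ := hfs (q ⟨k+1, h⟩)
      have hΔ := hgap k h
      have := h3 (q ⟨k, Nat.lt_of_succ_lt h⟩)
      rw [le_div_iff₀ hΔ]
      nlinarith
    · exact le_refl _
  have hσanti : ∀ k, σ (k+1) ≤ σ k := by
    intro k
    by_cases h2 : k + 2 < m
    · have h1 : k + 1 < m := Nat.lt_of_succ_lt h2
      obtain ⟨σ', hs1, hs2, hs3⟩ := hfs (q ⟨k+1, h1⟩)
      have hΔ1 := hgap k h1
      have hΔ2 := hgap (k+1) h2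
      have e1 := hs3 (q ⟨k, Nat.lt_of_succ_lt h1⟩)
      have e2 := hs3 (q ⟨k+2, h2⟩)
      have hL : σ (k+1) ≤ σ' := by
        simp only [hσ, dif_pos h2]
        rw [div_le_iff₀ hΔ2]
        nlinarith
      have hR : σ' ≤ σ k := by
        simp only [hσ, dif_pos h1]
        rw [le_div_iff₀ hΔ1]
        nlinarith
      linarith
    · have : σ (k+1) = -1 := by simp only [hσ, dif_neg h2]
      rw [this]
      exact hσlb k
  -- the weights
  set w : ℕ → ℝ := fun j => if j = 0 then -σ 0 else σ (j-1) - σ j with hw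
  have hwnn : ∀ j, 0 ≤ w j := by
    intro j
    simp only [hw]
    split
    · linarith [hσub 0]
    · rename_i hj
      obtain ⟨j', rfl⟩ := Nat.exists_eq_succ_of_ne_zero hj
      simpa using sub_nonneg.mpr (hσanti j')
  have hWsum : ∀ t : ℕ, (∑ j ∈ Finset.range (t+1), w j) = -σ t := by
    intro t
    induction t with
    | zero => simp [hw]
    | succ t ih =>
        rw [Finset.sum_range_succ, ih]
        simp only [hw, Nat.succ_ne_zero, if_false, Nat.succ_sub_one]
        ring
  have hσtop : σ (m-1) = -1 := by
    have : ¬ (m - 1 + 1 < m) := by omega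
    simp only [hσ, dif_neg this]
  have htotal : (∑ j ∈ Finset.range m, w j) = 1 := by
    have hm1 : m = (m - 1) + 1 := by omega
    rw [hm1, hWsum, hσtop]
    norm_num
  -- elementary concave bumps
  set G : ℝ → ℝ → ℝ := fun s δ => max s 0 - max s δ with hG
  set qq : ℕ → ℝ := fun j => if h : j < m then q ⟨j, h⟩ else 0 with hqq
  -- the grid identity
  have hGzero : ∀ s : ℝ, G s 0 = 0 := fun s => by simp [hG]
  have key : ∀ k (hk : k < m),
      f (qq k) = ∑ j ∈ Finset.range m, w j * G (qq j) (qq k) := by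
    -- consecutive increments agree
    have hstep : ∀ k (hk1 : k + 1 < m),
        (f (qq (k+1)) - ∑ j ∈ Finset.range m, w j * G (qq j) (qq (k+1)))
          = f (qq k) - ∑ j ∈ Finset.range m, w j * G (qq j) (qq k) := by
      intro k hk1
      have hk : k < m := Nat.lt_of_succ_lt hk1
      have hqqk : qq k = q ⟨k, hk⟩ := by simp [hqq, hk]
      have hqqk1 : qq (k+1) = q ⟨k+1, hk1⟩ := by simp [hqq, hk1]
      set Δ : ℝ := q ⟨k+1, hk1⟩ - q ⟨k, hk⟩ with hΔdef
      have hΔ : 0 < Δ := hgap k hk1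
      have hfdiff : f (qq (k+1)) - f (qq k) = σ k * Δ := by
        rw [hqqk, hqqk1]
        simp only [hσ, dif_pos hk1]
        field_simp
        exact (mul_div_cancel_right₀ _ hΔ.ne').symm
      have hGdiff : ∀ j, j < m →
          G (qq j) (qq (k+1)) - G (qq j) (qq k) = if j ≤ k then -Δ else 0 := by
        intro j hj
        have hqqj : qq j = q ⟨j, hj⟩ := by simp [hqq, hj]
        rw [hqqk, hqqk1, hqqj]
        split
        · rename_i hjk
          have hle : q ⟨j, hj⟩ ≤ q ⟨k, hk⟩ := by
            rcases eq_or_lt_of_le hjk with h | h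
            · exact le_of_eq (congrArg q (Fin.ext h))
            · exact le_of_lt (hqmono (by simp [Fin.lt_def]; omega))
          have hle1 : q ⟨j, hj⟩ ≤ q ⟨k+1, hk1⟩ := le_trans hle (by linarith)
          simp only [hG]
          rw [max_eq_right hle, max_eq_right hle1]
          ring
        · rename_i hjk
          have hge : q ⟨k+1, hk1⟩ ≤ q ⟨j, hj⟩ := by
            rcases eq_or_lt_of_le (show k+1 ≤ j by omega) with h | h
            · exact le_of_eq (congrArg q (Fin.ext h))
            · exact le_of_lt (hqmono (by simp [Fin.lt_def]; omega))
          have hge0 : q ⟨k, hk⟩ ≤ q ⟨j, hj⟩ := by linarith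
          simp only [hG]
          rw [max_eq_left hge, max_eq_left hge0]
          ring
      have hsumdiff : (∑ j ∈ Finset.range m, w j * G (qq j) (qq (k+1)))
          - (∑ j ∈ Finset.range m, w j * G (qq j) (qq k))
          = σ k * Δ := by
        rw [← Finset.sum_sub_distrib]
        have : ∀ j ∈ Finset.range m,
            w j * G (qq j) (qq (k+1)) - w j * G (qq j) (qq k)
            = w j * (if j ≤ k then -Δ else 0) := by
          intro j hj
          rw [← mul_sub, hGdiff j (Finset.mem_range.mp hj)]
        rw [Finset.sum_congr rfl this]
        have hsub : Finset.range (k+1) ⊆ Finset.range m :=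
          Finset.range_subset_range.mpr hk1.le
        rw [← Finset.sum_subset hsub (by
          intro j hj hnj
          have : ¬ j ≤ k := by
            simp only [Finset.mem_range] at hnj
            omega
          rw [if_neg this, mul_zero])]
        have : ∀ j ∈ Finset.range (k+1), w j * (if j ≤ k then -Δ else 0) = w j * (-Δ) := by
          intro j hj
          rw [if_pos (by simp only [Finset.mem_range] at hj; omega)]
        rw [Finset.sum_congr rfl this, ← Finset.sum_mul, hWsum k]
        ring
      linarith [hfdiff, hsumdiff]
    -- value at the grid point 0
    obtain ⟨k0, hk0⟩ := hqsurj 0 h0D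
    have hbase : f (qq k0.val) - ∑ j ∈ Finset.range m, w j * G (qq j) (qq k0.val) = 0 := by
      have hqqk0 : qq k0.val = 0 := by
        simp only [hqq, dif_pos k0.isLt]
        rw [← hk0]
      rw [hqqk0, hf0]
      simp only [hGzero, mul_zero, Finset.sum_const_zero]
      ring
    -- propagate equality of the defect along the grid
    have hprop : ∀ k1 k2, k1 ≤ k2 → k2 < m →
        f (qq k1) - ∑ j ∈ Finset.range m, w j * G (qq j) (qq k1)
          = f (qq k2) - ∑ j ∈ Finset.range m, w j * G (qq j) (qq k2) := by
      intro k1 k2 hle hk2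
      induction k2, hle using Nat.le_induction with
      | base => rfl
      | succ k2 hle ih =>
          rw [ih (Nat.lt_of_succ_lt hk2), ← hstep k2 hk2]
    intro k hk
    have hk0m : k0.val < m := k0.isLt
    rcases le_total k k0.val with h | h
    · have := hprop k k0.val h hk0m
      linarith [hbase, this]
    · have := hprop k0.val k h hk
      linarith [hbase, this]
  -- the tropical vertices
  set P : ℕ → (Fin n → ℝ) := fun j => fun i => a i + G (qq j) (d i) with hP
  have hPmem : ∀ j, P j ∈ tconv ({a, b} : Set (Fin n → ℝ)) := by
    intro j
    set s : ℝ := qq j with hs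
    set lam : ℝ := max s 0 - s with hlam
    set mu : ℝ := max s 0 with hmu
    have hminlm : min lam mu = 0 := by
      rcases le_total s 0 with h | h
      · have h1 : mu = 0 := by simp [hmu, max_eq_right h]
        have h2 : 0 ≤ lam := by simp [hlam, h1]; linarith [le_max_left s (0:ℝ), h]
        rw [h1, min_eq_right h2]
      · have h1 : lam = 0 := by rw [hlam, hmu, max_eq_left h]; ring
        have h2 : 0 ≤ mu := le_trans h (le_max_left s 0)
        rw [h1, min_eq_left h2]
    have hPeq : P j = fun i => min (lam + a i) (mu + b i) := by
      funext i
      show a i + G s (d i) = min (lam + a i) (mu + b i)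
      have hbi : b i = a i - d i := by simp [hd]
      rcases le_total s (d i) with h | h
      · have h1 : max s (d i) = d i := max_eq_right h
        have h2 : mu + b i ≤ lam + a i := by
          rw [hbi, hmu, hlam]; linarith
        rw [min_eq_right h2, hG]
        simp only
        rw [h1, hbi, hmu]; ring
      · have h1 : max s (d i) = s := max_eq_left h
        have h2 : lam + a i ≤ mu + b i := by
          rw [hbi, hmu, hlam]; linarith
        rw [min_eq_left h2, hG]
        simp only
        rw [h1, hlam]; ring
    rw [hPeq]
    exact tropConvex_tconv _ a (subset_tconv _ (by simp)) b
      (subset_tconv _ (by simp)) lam mu hminlm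
  -- x is the convex combination
  have hxsum : x = ∑ j ∈ Finset.range m, w j • P j := by
    funext i
    obtain ⟨kd, hkd⟩ := hqsurj (d i) (hdD i)
    have hqqkd : qq kd.val = d i := by
      simp only [hqq, dif_pos kd.isLt]
      rw [← hkd]
    have hfd : f (d i) = ∑ j ∈ Finset.range m, w j * G (qq j) (d i) := by
      have := key kd.val kd.isLt
      rw [hqqkd] at this
      exact this
    have hsapp : (∑ j ∈ Finset.range m, w j • P j) i
        = ∑ j ∈ Finset.range m, w j * (a i + G (qq j) (d i)) := by
      rw [Finset.sum_apply]
      rfl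
    rw [hsapp, hfx i]
    have : ∑ j ∈ Finset.range m, w j * (a i + G (qq j) (d i))
        = (∑ j ∈ Finset.range m, w j) * a i
          + ∑ j ∈ Finset.range m, w j * G (qq j) (d i) := by
      simp only [mul_add]
      rw [Finset.sum_add_distrib, Finset.sum_mul]
    rw [this, htotal, hfd]
    ring
  rw [hxsum, ← Finset.centerMass_eq_of_sum_1 (Finset.range m) P htotal]
  exact Finset.centerMass_mem_convexHull _ (fun j _ => hwnn j)
    (by rw [htotal]; norm_num) (fun j _ => hPmem j)

end TropAux

theorem tconv_segment_eq_convexHull_tconv (n : ℕ) (a b : Fin n → ℝ) :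
    tconv (segment ℝ a b) = convexHull ℝ (tconv {a, b}) := by
  apply subset_antisymm
  · exact (TropAux.tconv_subset (TropAux.tropConvex_Sset a b)
      (TropAux.segment_subset_Sset a b)).trans (TropAux.Sset_subset_convexHull a b)
  · exact (convexHull_min (TropAux.tconv_subset (TropAux.tropConvex_Sset a b)
      (TropAux.pair_subset_Sset a b)) (TropAux.convex_Sset a b)).trans
      (TropAux.Sset_subset_tconv_segment a b)
end

section
/- For all a, b ∈ ℝ^n, the dimension of tconv(segment ℝ a b) — i.e., the rank (finrank over ℝ) of the direction of the affine span of tconv(segment ℝ a b) — equals the cardinality of the set {c ∈ ℝ : c ≠ 0 and a_i − b_i = c for some i} of distinct nonzero coordinates of a − b. -/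
namespace TropSegAux

variable {n : ℕ}

theorem tropConvex_tconv (U : Set (Fin n → ℝ)) : TropConvex (tconv U) := by
  intro x hx y hy α β hmin V hV
  exact hV.1 x (hx V hV) y (hy V hV) α β hmin

theorem subset_tconv (U : Set (Fin n → ℝ)) : U ⊆ tconv U :=
  fun _x hx _V hV => hV.2 hx

/-- Indicator vector of the coordinates where `a - b` takes the value `c`. -/
noncomputable def evec (a b : Fin n → ℝ) (c : ℝ) : Fin n → ℝ :=
  fun i => if a i - b i = c then 1 else 0

noncomputable def ptP (a b : Fin n → ℝ) (γ : ℝ) : Fin n → ℝ :=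
  fun i => min (0 + a i) (γ + b i)

noncomputable def ptQ (a b : Fin n → ℝ) (γ : ℝ) : Fin n → ℝ :=
  fun i => min (γ + a i) (0 + b i)

theorem ptP_mem (a b : Fin n → ℝ) {γ : ℝ} (hγ : 0 ≤ γ) :
    ptP a b γ ∈ tconv (segment ℝ a b) :=
  tropConvex_tconv _ a (subset_tconv _ (left_mem_segment ℝ a b)) b
    (subset_tconv _ (right_mem_segment ℝ a b)) 0 γ (min_eq_left hγ)

theorem ptQ_mem (a b : Fin n → ℝ) {γ : ℝ} (hγ : 0 ≤ γ) :
    ptQ a b γ ∈ tconv (segment ℝ a b) :=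
  tropConvex_tconv _ a (subset_tconv _ (left_mem_segment ℝ a b)) b
    (subset_tconv _ (right_mem_segment ℝ a b)) γ 0 (min_eq_right hγ)

theorem evec_pos (a b : Fin n → ℝ) (c δ : ℝ) (hδ : 0 < δ)
    (hgap : ∀ i, a i - b i ≠ c → δ ≤ |a i - b i - c|) :
    evec a b c = δ⁻¹ • ((ptP a b c - ptP a b (c - δ)) - (ptP a b (c + δ) - ptP a b c)) := by
  funext i
  simp only [evec, ptP, Pi.smul_apply, Pi.sub_apply, smul_eq_mul, zero_add]
  rcases lt_trichotomy (a i - b i) c with h | h | h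
  · have hne : a i - b i ≠ c := ne_of_lt h
    have hg := hgap i hne
    rw [abs_of_neg (by linarith)] at hg
    rw [if_neg hne, min_eq_left (by linarith), min_eq_left (by linarith),
      min_eq_left (by linarith)]
    ring
  · rw [if_pos h, min_eq_right (by linarith), min_eq_right (by linarith),
      min_eq_left (by linarith)]
    have hai : a i = c + b i := by linarith
    rw [hai]
    field_simp
    ring
  · have hne : a i - b i ≠ c := ne_of_gt h
    have hg := hgap i hne
    rw [abs_of_pos (by linarith)] at hg
    rw [if_neg hne, min_eq_right (by linarith), min_eq_right (by linarith),
      min_eq_right (by linarith)]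
    ring

theorem evec_neg (a b : Fin n → ℝ) (c δ : ℝ) (hδ : 0 < δ)
    (hgap : ∀ i, a i - b i ≠ c → δ ≤ |a i - b i - c|) :
    evec a b c = δ⁻¹ • ((ptQ a b (-c) - ptQ a b (-c - δ)) - (ptQ a b (-c + δ) - ptQ a b (-c))) := by
  funext i
  simp only [evec, ptQ, Pi.smul_apply, Pi.sub_apply, smul_eq_mul, zero_add]
  rcases lt_trichotomy (a i - b i) c with h | h | h
  · have hne : a i - b i ≠ c := ne_of_lt h
    have hg := hgap i hne
    rw [abs_of_neg (by linarith)] at hg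
    rw [if_neg hne, min_eq_left (by linarith), min_eq_left (by linarith),
      min_eq_left (by linarith)]
    ring
  · rw [if_pos h, min_eq_right (by linarith), min_eq_left (by linarith),
      min_eq_right (by linarith)]
    have hai : a i = c + b i := by linarith
    rw [hai]
    field_simp
    ring
  · have hne : a i - b i ≠ c := ne_of_gt h
    have hg := hgap i hne
    rw [abs_of_pos (by linarith)] at hg
    rw [if_neg hne, min_eq_right (by linarith), min_eq_right (by linarith),
      min_eq_right (by linarith)]
    ring

/-- The linear constraints satisfied by (translated) points of the tropical hull. -/
def Vsub (a b : Fin n → ℝ) : Submodule ℝ (Fin n → ℝ) where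
  carrier := {v | (∀ i j, a i - b i = a j - b j → v i = v j) ∧ ∀ i, a i - b i = 0 → v i = 0}
  add_mem' := by
    rintro x y ⟨hx1, hx2⟩ ⟨hy1, hy2⟩
    exact ⟨fun i j h => by simp [hx1 i j h, hy1 i j h],
      fun i h => by simp [hx2 i h, hy2 i h]⟩
  zero_mem' := ⟨fun _ _ _ => rfl, fun _ _ => rfl⟩
  smul_mem' := by
    rintro r x ⟨hx1, hx2⟩
    exact ⟨fun i j h => by simp [hx1 i j h], fun i h => by simp [hx2 i h]⟩

theorem mem_Vsub {a b v : Fin n → ℝ} :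
    v ∈ Vsub a b ↔
      (∀ i j, a i - b i = a j - b j → v i = v j) ∧ ∀ i, a i - b i = 0 → v i = 0 :=
  Iff.rfl

end TropSegAux

open TropSegAux in
theorem dim_tconv_segment (n : ℕ) (a b : Fin n → ℝ) :
    Module.finrank ℝ (affineSpan ℝ (tconv (segment ℝ a b))).direction =
      {c : ℝ | c ≠ 0 ∧ ∃ i, a i - b i = c}.ncard := by
  classical
  set C : Set ℝ := {c : ℝ | c ≠ 0 ∧ ∃ i, a i - b i = c} with hCdef
  set Cfin : Finset ℝ := (Finset.univ.image (fun i => a i - b i)).filter (fun c => c ≠ 0)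
    with hCfindef
  have hCC : C = ↑Cfin := by
    ext c
    simp only [hCdef, Set.mem_setOf_eq, hCfindef, Finset.coe_filter, Finset.mem_image,
      Finset.mem_univ, true_and, Set.mem_setOf_eq]
    tauto
  set D := (affineSpan ℝ (tconv (segment ℝ a b))).direction with hDdef
  -- lower bound: every generator is in the direction
  have hlow : Submodule.span ℝ (evec a b '' C) ≤ D := by
    rw [Submodule.span_le]
    rintro _ ⟨c, hc, rfl⟩
    obtain ⟨hc0, i0, hi0⟩ := hc
    set T : Finset ℝ :=
      insert |c| ((Finset.univ.image (fun i => |a i - b i - c|)).filter (fun x => 0 < x)) with hT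
    have hTne : T.Nonempty := ⟨|c|, Finset.mem_insert_self _ _⟩
    set δ := T.min' hTne with hδdef
    have hδpos : 0 < δ := by
      have hm := T.min'_mem hTne
      rcases Finset.mem_insert.mp hm with h | h
      · show (0:ℝ) < T.min' hTne; rw [h]; exact abs_pos.mpr hc0
      · exact (Finset.mem_filter.mp h).2
    have hδc : δ ≤ |c| := Finset.min'_le _ _ (Finset.mem_insert_self _ _)
    have hgap : ∀ i, a i - b i ≠ c → δ ≤ |a i - b i - c| := by
      intro i hi
      apply Finset.min'_le
      apply Finset.mem_insert_of_mem
      exact Finset.mem_filter.mpr ⟨Finset.mem_image.mpr ⟨i, Finset.mem_univ _, rfl⟩,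
        abs_pos.mpr (sub_ne_zero.mpr hi)⟩
    have hmemD : ∀ x y : Fin n → ℝ, x ∈ tconv (segment ℝ a b) → y ∈ tconv (segment ℝ a b) →
        x - y ∈ D := by
      intro x y hx hy
      have := AffineSubspace.vsub_mem_direction (subset_affineSpan ℝ _ hx)
        (subset_affineSpan ℝ _ hy)
      simpa using this
    simp only [SetLike.mem_coe]
    rcases hc0.lt_or_gt with hneg | hpos
    · rw [abs_of_neg hneg] at hδc
      rw [evec_neg a b c δ hδpos hgap]
      exact D.smul_mem _ (D.sub_mem
        (hmemD _ _ (ptQ_mem a b (by linarith)) (ptQ_mem a b (by linarith)))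
        (hmemD _ _ (ptQ_mem a b (by linarith)) (ptQ_mem a b (by linarith))))
    · rw [abs_of_pos hpos] at hδc
      rw [evec_pos a b c δ hδpos hgap]
      exact D.smul_mem _ (D.sub_mem
        (hmemD _ _ (ptP_mem a b (by linarith)) (ptP_mem a b (by linarith)))
        (hmemD _ _ (ptP_mem a b (by linarith)) (ptP_mem a b (by linarith))))
  -- upper bound: the direction satisfies the linear constraints
  have hW : tconv (segment ℝ a b) ⊆ (AffineSubspace.mk' b (Vsub a b) : Set (Fin n → ℝ)) := by
    apply Set.sInter_subset_of_mem
    constructor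
    · intro x hx y hy α β hmin
      rw [SetLike.mem_coe, AffineSubspace.mem_mk', vsub_eq_sub] at hx hy ⊢
      obtain ⟨hx1, hx2⟩ := mem_Vsub.mp hx
      obtain ⟨hy1, hy2⟩ := mem_Vsub.mp hy
      refine mem_Vsub.mpr ⟨?_, ?_⟩
      · intro i j hij
        have e1 := hx1 i j hij
        have e2 := hy1 i j hij
        simp only [Pi.sub_apply] at e1 e2 ⊢
        rcases le_total (α + x i) (β + y i) with hle | hle
        · rw [min_eq_left hle, min_eq_left (by linarith)]; linarith
        · rw [min_eq_right hle, min_eq_right (by linarith)]; linarith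
      · intro i h0
        have e1 := hx2 i h0
        have e2 := hy2 i h0
        simp only [Pi.sub_apply] at e1 e2 ⊢
        rcases le_total α β with hle | hle
        · have hα : α = 0 := by rw [min_eq_left hle] at hmin; exact hmin
          rw [min_eq_left (by linarith)]; linarith
        · have hβ : β = 0 := by rw [min_eq_right hle] at hmin; exact hmin
          rw [min_eq_right (by linarith)]; linarith
    · rintro x ⟨u, t, hu, ht, hut, rfl⟩
      rw [SetLike.mem_coe, AffineSubspace.mem_mk', vsub_eq_sub]
      have key : ∀ i, (u • a + t • b - b) i = u * (a i - b i) := by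
        intro i
        simp only [Pi.sub_apply, Pi.add_apply, Pi.smul_apply, smul_eq_mul]
        linear_combination (b i) * hut
      refine mem_Vsub.mpr ⟨?_, ?_⟩
      · intro i j hij
        rw [key i, key j, hij]
      · intro i h0
        rw [key i, h0, mul_zero]
  have hD2 : D ≤ Vsub a b := by
    have h1 : affineSpan ℝ (tconv (segment ℝ a b)) ≤ AffineSubspace.mk' b (Vsub a b) :=
      affineSpan_le.mpr hW
    have h2 := AffineSubspace.direction_le h1
    rwa [AffineSubspace.direction_mk'] at h2
  -- constraints are spanned by the indicator vectors
  have hD3 : Vsub a b ≤ Submodule.span ℝ (evec a b '' C) := by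
    intro v hv
    obtain ⟨hv1, hv2⟩ := mem_Vsub.mp hv
    set g : ℝ → ℝ := fun c => if h : ∃ j, a j - b j = c then v h.choose else 0 with hg
    have hvsum : v = ∑ c ∈ Cfin, g c • evec a b c := by
      funext i
      rw [Finset.sum_apply]
      simp only [Pi.smul_apply, smul_eq_mul]
      by_cases h0 : a i - b i = 0
      · rw [hv2 i h0]
        refine (Finset.sum_eq_zero ?_).symm
        intro c hc
        have hcne : c ≠ 0 := (Finset.mem_filter.mp hc).2
        rw [evec, if_neg (by rw [h0]; exact fun h => hcne h.symm), mul_zero]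
      · have hmem : (a i - b i) ∈ Cfin := by
          rw [hCfindef]
          exact Finset.mem_filter.mpr ⟨Finset.mem_image.mpr ⟨i, Finset.mem_univ _, rfl⟩, h0⟩
        rw [Finset.sum_eq_single (a i - b i)]
        · rw [evec, if_pos rfl, mul_one]
          have hex : ∃ j, a j - b j = a i - b i := ⟨i, rfl⟩
          simp only [hg]
          rw [dif_pos hex]
          exact (hv1 _ _ hex.choose_spec).symm
        · intro c _ hcne
          rw [evec, if_neg (fun h => hcne h.symm), mul_zero]
        · intro habs
          exact absurd hmem habs
      -- done
    rw [hvsum]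
    apply Submodule.sum_mem
    intro c hc
    apply Submodule.smul_mem
    apply Submodule.subset_span
    exact ⟨c, by rw [hCC]; exact_mod_cast hc, rfl⟩
  have hspan : D = Submodule.span ℝ (evec a b '' C) :=
    le_antisymm (hD2.trans hD3) hlow
  rw [hspan]
  -- compute the rank of the span of the indicator vectors
  have hwit : ∀ c : {x // x ∈ Cfin}, ∃ i, a i - b i = (c : ℝ) := by
    intro c
    have h1 := (Finset.mem_filter.mp c.2).1
    obtain ⟨i, -, hi⟩ := Finset.mem_image.mp h1
    exact ⟨i, hi⟩
  set wt : {x // x ∈ Cfin} → Fin n := fun c => (hwit c).choose with hwt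
  have hwspec : ∀ c, a (wt c) - b (wt c) = (c : ℝ) := fun c => (hwit c).choose_spec
  set φ : (Fin n → ℝ) →ₗ[ℝ] ({x // x ∈ Cfin} → ℝ) := LinearMap.funLeft ℝ ℝ wt with hφ
  have hcomp : φ ∘ (fun c : {x // x ∈ Cfin} => evec a b (c : ℝ)) =
      fun c => Pi.single c (1 : ℝ) := by
    funext c c'
    simp only [Function.comp_apply, hφ, LinearMap.funLeft_apply, evec, hwspec, Pi.single_apply]
    by_cases h : c' = c
    · rw [if_pos (by rw [h]), if_pos h]
    · rw [if_neg (fun he => h (Subtype.ext he)), if_neg h]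
  have hli : LinearIndependent ℝ (fun c : {x // x ∈ Cfin} => evec a b (c : ℝ)) := by
    apply LinearIndependent.of_comp φ
    rw [hcomp]
    have hB : (fun c : {x // x ∈ Cfin} => Pi.single c (1 : ℝ)) =
        ⇑(Pi.basisFun ℝ {x // x ∈ Cfin}) := by
      funext c; rw [Pi.basisFun_apply]
    have hli' := (Pi.basisFun ℝ {x // x ∈ Cfin}).linearIndependent
    rwa [← hB] at hli'
  have hrange : Set.range (fun c : {x // x ∈ Cfin} => evec a b (c : ℝ)) = evec a b '' C := by
    rw [hCC]
    ext x
    simp only [Set.mem_range, Set.mem_image, Finset.mem_coe, Subtype.exists, exists_prop]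
  rw [← hrange, finrank_span_eq_card hli, hCC, Set.ncard_coe_finset, Fintype.card_coe]
end

section
/- Let F = C_1 ∪ … ∪ C_N ⊆ ℝ^n, where each C_i = pos(G_i) is the set of all finite nonnegative linear combinations of a finite set G_i ⊆ ℝ^n (so F is a finite union of finitely generated convex cones). If F is tropically convex, then the maximum over i of the finrank over ℝ of the linear span of G_i equals the maximum over x ∈ F of the cardinality of the set {c ∈ ℝ : c ≠ 0 and x_k = c for some k} of distinct nonzero coordinates of x. -/
/-- The set of all finite nonnegative real linear combinations of elements of `S`. -/
def posHull {n : ℕ} (S : Set (Fin n → ℝ)) : Set (Fin n → ℝ) :=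
  {x | ∃ (k : ℕ) (c : Fin k → ℝ) (v : Fin k → Fin n → ℝ),
    (∀ i, 0 ≤ c i) ∧ (∀ i, v i ∈ S) ∧ x = ∑ i, c i • v i}

lemma posHull_zero_mem {n : ℕ} (S : Set (Fin n → ℝ)) : 0 ∈ posHull S :=
  ⟨0, Fin.elim0, Fin.elim0, fun i => i.elim0, fun i => i.elim0, by simp⟩

lemma posHull_smul_mem {n : ℕ} {S : Set (Fin n → ℝ)} {x : Fin n → ℝ} {t : ℝ}
    (ht : 0 ≤ t) (hx : x ∈ posHull S) : t • x ∈ posHull S := by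
  obtain ⟨k, c, v, hc, hv, rfl⟩ := hx
  refine ⟨k, fun i => t * c i, v, fun i => mul_nonneg ht (hc i), hv, ?_⟩
  rw [Finset.smul_sum]
  exact Finset.sum_congr rfl fun i _ => (smul_smul t (c i) (v i))

lemma posHull_add_mem {n : ℕ} {S : Set (Fin n → ℝ)} {x y : Fin n → ℝ}
    (hx : x ∈ posHull S) (hy : y ∈ posHull S) : x + y ∈ posHull S := by
  obtain ⟨k, c, v, hc, hv, rfl⟩ := hx
  obtain ⟨k', c', v', hc', hv', rfl⟩ := hy
  refine ⟨k + k', Fin.append c c', Fin.append v v', ?_, ?_, ?_⟩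
  · intro i
    induction i using Fin.addCases with
    | left i => rw [Fin.append_left]; exact hc i
    | right i => rw [Fin.append_right]; exact hc' i
  · intro i
    induction i using Fin.addCases with
    | left i => rw [Fin.append_left]; exact hv i
    | right i => rw [Fin.append_right]; exact hv' i
  · rw [Fin.sum_univ_add]
    congr 1 <;> apply Finset.sum_congr rfl <;> intro i _ <;>
      simp [Fin.append_left, Fin.append_right]

lemma posHull_convex {n : ℕ} (S : Set (Fin n → ℝ)) : Convex ℝ (posHull S) := by
  intro x hx y hy a b ha hb _
  exact posHull_add_mem (posHull_smul_mem ha hx) (posHull_smul_mem hb hy)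

lemma posHull_subset_span {n : ℕ} (S : Set (Fin n → ℝ)) :
    posHull S ⊆ (Submodule.span ℝ S : Set (Fin n → ℝ)) := by
  rintro x ⟨k, c, v, hc, hv, rfl⟩
  exact Submodule.sum_mem _ fun i _ =>
    Submodule.smul_mem _ _ (Submodule.subset_span (hv i))

lemma subset_posHull {n : ℕ} (S : Set (Fin n → ℝ)) : S ⊆ posHull S := by
  intro g hg
  exact ⟨1, fun _ => 1, fun _ => g, fun _ => zero_le_one, fun _ => hg, by simp⟩

def MinRep (f : ℝ → ℝ) : Prop :=
  ∃ (S : Finset ℕ) (hS : S.Nonempty) (a l : ℕ → ℝ),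
    (∀ r ∈ S, 0 ≤ a r) ∧ (∀ r ∈ S, 0 ≤ l r) ∧ (∃ r ∈ S, a r = 0) ∧
    ∀ c, f c = S.inf' hS (fun r => a r + l r * c)

lemma minRep_linear {q : ℝ} (hq : 0 ≤ q) : MinRep (fun c => q * c) :=
  ⟨{0}, Finset.singleton_nonempty 0, fun _ => 0, fun _ => q,
    fun _ _ => le_refl 0, fun _ _ => hq, ⟨0, Finset.mem_singleton_self 0, rfl⟩,
    fun c => by simp⟩

lemma minRep_min2 {p p' q q' : ℝ} (hp : 0 ≤ p) (hp' : 0 ≤ p') (hq : 0 ≤ q) (hq' : 0 ≤ q')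
    (hmin : p = 0 ∨ p' = 0) : MinRep (fun c => min (p + q * c) (p' + q' * c)) := by
  refine ⟨{0, 1}, by simp, fun r => if r = 0 then p else p', fun r => if r = 0 then q else q',
    ?_, ?_, ?_, ?_⟩
  · intro r _; dsimp only; split <;> assumption
  · intro r _; dsimp only; split <;> assumption
  · rcases hmin with h | h
    · exact ⟨0, by simp, by simpa using h⟩
    · exact ⟨1, by simp, by simpa using h⟩
  · intro c
    apply le_antisymm
    · apply Finset.le_inf'
      intro r hr
      rcases Finset.mem_insert.mp hr with rfl | hr
      · exact min_le_left _ _ |>.trans (le_of_eq (by norm_num))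
      · rw [Finset.mem_singleton] at hr
        subst hr
        exact min_le_right _ _ |>.trans (le_of_eq (by norm_num))
    · apply le_min
      · have := Finset.inf'_le (s := ({0,1} : Finset ℕ))
          (fun r => (if r = 0 then p else p') + (if r = 0 then q else q') * c)
          (by simp : (0:ℕ) ∈ ({0,1} : Finset ℕ))
        simpa using this
      · have := Finset.inf'_le (s := ({0,1} : Finset ℕ))
          (fun r => (if r = 0 then p else p') + (if r = 0 then q else q') * c)
          (by simp : (1:ℕ) ∈ ({0,1} : Finset ℕ))
        simpa using this

lemma MinRep.add {f g : ℝ → ℝ} (hf : MinRep f) (hg : MinRep g) :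
    MinRep (fun c => f c + g c) := by
  obtain ⟨S, hS, a, l, ha, hl, ⟨r0, hr0, hr0z⟩, hf⟩ := hf
  obtain ⟨T, hT, b, m, hb, hm, ⟨s0, hs0, hs0z⟩, hg⟩ := hg
  classical
  refine ⟨(S ×ˢ T).image (fun p => Nat.pair p.1 p.2), (hS.product hT).image _,
    fun r => a r.unpair.1 + b r.unpair.2, fun r => l r.unpair.1 + m r.unpair.2, ?_, ?_, ?_, ?_⟩
  · rintro r hr
    obtain ⟨p, hp, rfl⟩ := Finset.mem_image.mp hr
    rw [Finset.mem_product] at hp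
    simp only [Nat.unpair_pair]
    exact add_nonneg (ha _ hp.1) (hb _ hp.2)
  · rintro r hr
    obtain ⟨p, hp, rfl⟩ := Finset.mem_image.mp hr
    rw [Finset.mem_product] at hp
    simp only [Nat.unpair_pair]
    exact add_nonneg (hl _ hp.1) (hm _ hp.2)
  · refine ⟨Nat.pair r0 s0, Finset.mem_image.mpr ⟨(r0, s0),
      Finset.mem_product.mpr ⟨hr0, hs0⟩, rfl⟩, ?_⟩
    simp only [Nat.unpair_pair]
    rw [hr0z, hs0z, add_zero]
  · intro c
    rw [Finset.inf'_image]
    have key : ((S ×ˢ T).inf' (hS.product hT)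
        ((fun r => a (Nat.unpair r).1 + b (Nat.unpair r).2
          + (l (Nat.unpair r).1 + m (Nat.unpair r).2) * c) ∘ fun p => Nat.pair p.1 p.2)) =
        S.inf' hS (fun r => a r + l r * c) + T.inf' hT (fun s => b s + m s * c) := by
      apply le_antisymm
      · obtain ⟨r1, hr1, hre⟩ := Finset.exists_mem_eq_inf' hS (fun r => a r + l r * c)
        obtain ⟨s1, hs1, hse⟩ := Finset.exists_mem_eq_inf' hT (fun s => b s + m s * c)
        rw [hre, hse]
        have hmem : ((r1, s1) : ℕ × ℕ) ∈ S ×ˢ T := Finset.mem_product.mpr ⟨hr1, hs1⟩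
        refine le_trans (Finset.inf'_le _ hmem) ?_
        simp only [Function.comp_apply, Nat.unpair_pair]
        exact le_of_eq (by ring)
      · apply Finset.le_inf'
        rintro ⟨r, s⟩ hp
        rw [Finset.mem_product] at hp
        have h1 := Finset.inf'_le (fun r => a r + l r * c) hp.1
        have h2 := Finset.inf'_le (fun s => b s + m s * c) hp.2
        simp only [Function.comp_apply, Nat.unpair_pair]
        calc S.inf' hS (fun r => a r + l r * c) + T.inf' hT (fun s => b s + m s * c)
            ≤ (a r + l r * c) + (b s + m s * c) := add_le_add h1 h2
          _ = a r + b s + (l r + m s) * c := by ring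
    rw [key]
    show f c + g c = _
    rw [hf, hg]

lemma minRep_sum {κ : Type*} (t : Finset κ) (f : κ → ℝ → ℝ)
    (h : ∀ j ∈ t, MinRep (f j)) : MinRep (fun c => ∑ j ∈ t, f j c) := by
  classical
  induction t using Finset.induction with
  | empty => simpa using minRep_linear (le_refl (0:ℝ))
  | insert _ _ hnotmem ih =>
    rename_i j t'
    have h1 : MinRep (f j) := h j (Finset.mem_insert_self _ _)
    have h2 : MinRep (fun c => ∑ j ∈ t', f j c) :=
      ih fun j hj => h j (Finset.mem_insert_of_mem hj)
    have h3 := h1.add h2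
    convert h3 using 2 with c
    rw [Finset.sum_insert hnotmem]

open Finset in
lemma inf'_const_add (T : Finset ℕ) (hT : T.Nonempty) (g : ℕ → ℝ) (cst : ℝ) :
    cst + T.inf' hT g = T.inf' hT (fun r => cst + g r) := by
  apply le_antisymm
  · exact Finset.le_inf' _ _ fun r hr => add_le_add le_rfl (Finset.inf'_le _ hr)
  · obtain ⟨r1, hr1, hre⟩ := Finset.exists_mem_eq_inf' hT g
    rw [hre]
    exact Finset.inf'_le (fun r => cst + g r) hr1

lemma inf'_eq_min_erase (T : Finset ℕ) (hT : T.Nonempty) (r0 : ℕ) (h : r0 ∈ T)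
    (hT' : (T.erase r0).Nonempty) (f : ℕ → ℝ) :
    T.inf' hT f = min (f r0) ((T.erase r0).inf' hT' f) := by
  apply le_antisymm
  · exact le_min (Finset.inf'_le _ h)
      (Finset.le_inf' _ _ fun r hr => Finset.inf'_le _ (Finset.mem_of_mem_erase hr))
  · apply Finset.le_inf'
    intro r hr
    by_cases hr0 : r = r0
    · subst hr0; exact min_le_left _ _
    · exact (min_le_right _ _).trans (Finset.inf'_le _ (Finset.mem_erase.mpr ⟨hr0, hr⟩))

lemma minRep_apply_mem {n : ℕ} {F : Set (Fin n → ℝ)} (htc : TropConvex F)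
    (hsmul : ∀ t : ℝ, 0 ≤ t → ∀ y ∈ F, t • y ∈ F)
    {x : Fin n → ℝ} (hx : x ∈ F) {f : ℝ → ℝ} (hf : MinRep f) :
    (fun i => f (x i)) ∈ F := by
  obtain ⟨S, hS, a, l, ha, hl, hz, hrep⟩ := hf
  have main : ∀ (m : ℕ) (S : Finset ℕ) (hS : S.Nonempty), S.card = m →
      ∀ (a l : ℕ → ℝ), (∀ r ∈ S, 0 ≤ a r) → (∀ r ∈ S, 0 ≤ l r) → (∃ r ∈ S, a r = 0) →
      (fun i => S.inf' hS (fun r => a r + l r * x i)) ∈ F := by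
    intro m
    induction m using Nat.strong_induction_on with
    | _ m ih =>
      intro S hS hcard a l ha hl hz
      obtain ⟨r0, hr0, hr0z⟩ := hz
      by_cases hS' : (S.erase r0).Nonempty
      · set cm := (S.erase r0).inf' hS' a with hcm
        have hcm0 : 0 ≤ cm :=
          Finset.le_inf' _ _ fun r hr => ha r (Finset.mem_of_mem_erase hr)
        have hcard' : (S.erase r0).card < m := by
          rw [← hcard]; exact Finset.card_erase_lt_of_mem hr0
        obtain ⟨r1, hr1, hr1e⟩ := Finset.exists_mem_eq_inf' hS' a
        have hy := ih _ hcard' (S.erase r0) hS' rfl (fun r => a r - cm) l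
          (fun r hr => sub_nonneg.mpr (Finset.inf'_le _ hr))
          (fun r hr => hl r (Finset.mem_of_mem_erase hr))
          ⟨r1, hr1, by rw [hcm, hr1e, sub_self]⟩
        have hy' : (fun i => (S.erase r0).inf' hS' (fun r => (a r - cm) + l r * x i)) ∈ F := hy
        have hx' : (l r0) • x ∈ F := hsmul _ (hl r0 hr0) x hx
        have hmem := htc _ hx' _ hy' 0 cm (min_eq_left hcm0)
        convert hmem using 1
        funext i
        rw [inf'_eq_min_erase S hS r0 hr0 hS' (fun r => a r + l r * x i)]
        have hconst : cm + (S.erase r0).inf' hS' (fun r => a r - cm + l r * x i) =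
            (S.erase r0).inf' hS' (fun r => a r + l r * x i) := by
          rw [inf'_const_add]
          congr 1
          funext r
          ring
        rw [← hconst]
        congr 1
        simp [hr0z]
      · have hSs : S = {r0} := by
          rw [Finset.eq_singleton_iff_unique_mem]
          refine ⟨hr0, fun r hr => ?_⟩
          by_contra hrne
          exact hS' ⟨r, Finset.mem_erase.mpr ⟨hrne, hr⟩⟩
        subst hSs
        have : (fun i => ({r0} : Finset ℕ).inf' hS (fun r => a r + l r * x i)) = (l r0) • x := by
          funext i
          simp [hr0z]
        rw [this]
        exact hsmul _ (hl r0 hr0) x hx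
  have := main S.card S hS rfl a l ha hl hz
  convert this using 1
  funext i
  rw [hrep]

lemma convex_subset_union {E : Type*} [AddCommGroup E] [Module ℝ E] {ι : Type*}
    [DecidableEq ι] (t : Finset ι) (ht : t.Nonempty) (W : ι → Submodule ℝ E) (C : Set E)
    (hC : Convex ℝ C) (hsub : C ⊆ ⋃ i ∈ t, (W i : Set E)) : ∃ i ∈ t, C ⊆ (W i : Set E) := by
  classical
  have main : ∀ (m : ℕ) (t : Finset ι), t.card = m → t.Nonempty →
      (C ⊆ ⋃ i ∈ t, (W i : Set E)) → ∃ i ∈ t, C ⊆ (W i : Set E) := by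
    intro m
    induction m using Nat.strong_induction_on with
    | _ m ih =>
      intro t hcard ht hsub
      by_cases hexist : ∃ i ∈ t, C ⊆ ⋃ j ∈ t.erase i, (W j : Set E)
      · obtain ⟨i, hi, hsub'⟩ := hexist
        by_cases he : (t.erase i).Nonempty
        · have hcard' : (t.erase i).card < m := by
            rw [← hcard]; exact Finset.card_erase_lt_of_mem hi
          obtain ⟨j, hj, hCj⟩ := ih _ hcard' (t.erase i) rfl he hsub'
          exact ⟨j, Finset.mem_of_mem_erase hj, hCj⟩
        · refine ⟨i, hi, fun x hx => ?_⟩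
          have := hsub' hx
          rw [Finset.not_nonempty_iff_eq_empty.mp he] at this
          simp at this
      · push_neg at hexist
        obtain ⟨i, hi⟩ := ht
        obtain ⟨p, hp, hpn⟩ := Set.not_subset.mp (hexist i hi)
        simp only [Set.mem_iUnion, not_exists, Finset.mem_erase] at hpn
        have hpn' : ∀ j ∈ t, j ≠ i → p ∉ (W j : Set E) := fun j hj hne => hpn j ⟨hne, hj⟩
        have hpW : p ∈ (W i : Set E) := by
          have := hsub hp
          simp only [Set.mem_iUnion] at this
          obtain ⟨j, hj, hmem⟩ := this
          by_cases hji : j = i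
          · exact hji ▸ hmem
          · exact absurd hmem (hpn' j hj hji)
        by_cases ht2 : ∃ i' ∈ t, i' ≠ i
        · obtain ⟨i', hi', hne'⟩ := ht2
          obtain ⟨q, hq, hqn⟩ := Set.not_subset.mp (hexist i' hi')
          simp only [Set.mem_iUnion, not_exists, Finset.mem_erase] at hqn
          have hqn' : ∀ j ∈ t, j ≠ i' → q ∉ (W j : Set E) := fun j hj hne => hqn j ⟨hne, hj⟩
          exfalso
          have hpq : p ≠ q := by
            rintro rfl
            exact hqn' i hi (Ne.symm hne') hpW
          set U : ι → Set ℝ := fun j => {u | u ∈ Set.Icc (0:ℝ) 1 ∧ p + u • (q - p) ∈ W j}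
            with hU
          have hsubsing : ∀ j ∈ t, (U j).Subsingleton := by
            intro j hj u hu u' hu' 
            by_contra hne
            have h1 : (u - u') • (q - p) ∈ W j := by
              have hmem := (W j).sub_mem hu.2 hu'.2
              have heq : (p + u • (q - p)) - (p + u' • (q - p)) = (u - u') • (q - p) := by
                rw [sub_smul]; abel
              rwa [heq] at hmem
            have hqp : q - p ∈ W j := by
              have := (W j).smul_mem (u - u')⁻¹ h1
              rwa [smul_smul, inv_mul_cancel₀ (sub_ne_zero.mpr hne), one_smul] at this
            have hpj : p ∈ (W j : Set E) := by
              have := (W j).sub_mem hu.2 ((W j).smul_mem u hqp)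
              simpa using this
            have hji : j = i := by
              by_contra hji
              exact hpn' j hj hji hpj
            subst hji
            have hqj : q ∈ (W j : Set E) := by
              have := (W j).add_mem hpj hqp
              simpa using this
            exact hqn' j hj (Ne.symm hne') hqj
          have cover : Set.Icc (0:ℝ) 1 ⊆ ⋃ j ∈ t, U j := by
            intro u hu
            obtain ⟨hu0, hu1⟩ := hu
            have hmemC : p + u • (q - p) ∈ C := by
              have := hC hp hq (by linarith : (0:ℝ) ≤ 1 - u) hu0 (by ring)
              convert this using 1
              rw [smul_sub, sub_smul, one_smul]
              abel
            obtain ⟨j, hj, hmem⟩ := by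
              have := hsub hmemC
              simpa only [Set.mem_iUnion] using this
            exact Set.mem_iUnion₂.mpr ⟨j, hj, ⟨hu0, hu1⟩, hmem⟩
          have hfin : (Set.Icc (0:ℝ) 1).Finite :=
            (Set.Finite.biUnion t.finite_toSet fun j hj => (hsubsing j hj).finite).subset cover
          exact Set.Icc_infinite (by norm_num : (0:ℝ) < 1) hfin
        · push_neg at ht2
          refine ⟨i, hi, fun x hx => ?_⟩
          obtain ⟨j, hj, hmem⟩ := by
            have := hsub hx
            simpa only [Set.mem_iUnion] using this
          rwa [ht2 j hj] at hmem
  exact main t.card t rfl ht hsub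

/-- The slot map. -/
def slotMap (n e : ℕ) (σ : Fin n → Option (Fin e)) : (Fin e → ℝ) →ₗ[ℝ] (Fin n → ℝ) where
  toFun c := fun k => (σ k).elim 0 c
  map_add' c c' := by funext k; cases h : σ k <;> simp [h]
  map_smul' r c := by funext k; cases h : σ k <;> simp [h]

lemma span_finrank_le {n e : ℕ} (Gset : Set (Fin n → ℝ))
    (hbound : ∀ y ∈ posHull Gset, ((Finset.univ.image y).filter (· ≠ 0)).card ≤ e) :
    Module.finrank ℝ (Submodule.span ℝ Gset) ≤ e := by
  classical
  set W : (Fin n → Option (Fin e)) → Submodule ℝ (Fin n → ℝ) :=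
    fun σ => LinearMap.range (slotMap n e σ) with hW
  have hcover : posHull Gset ⊆ ⋃ σ ∈ (Finset.univ : Finset (Fin n → Option (Fin e))),
      (W σ : Set (Fin n → ℝ)) := by
    intro y hy
    set Sy := (Finset.univ.image y).filter (· ≠ 0) with hSy
    have hcard : Fintype.card ↥Sy ≤ Fintype.card (Fin e) := by
      rw [Fintype.card_coe, Fintype.card_fin]
      exact hbound y hy
    obtain ⟨em⟩ := Function.Embedding.nonempty_of_card_le hcard
    set c : Fin e → ℝ := fun j => if h : ∃ s : ↥Sy, em s = j then (h.choose : ↥Sy).val else 0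
      with hc
    have hmem : ∀ k, y k ≠ 0 → y k ∈ Sy := by
      intro k hk
      rw [hSy, Finset.mem_filter]
      exact ⟨Finset.mem_image.mpr ⟨k, Finset.mem_univ k, rfl⟩, hk⟩
    set σ : Fin n → Option (Fin e) := fun k =>
      if hk : y k = 0 then none else some (em ⟨y k, hmem k hk⟩) with hσ
    have : y ∈ W σ := by
      refine ⟨c, ?_⟩
      funext k
      show (σ k).elim 0 c = y k
      by_cases hk : y k = 0
      · simp [hσ, hk]
      · simp only [hσ, hk, dif_neg, not_false_iff, Option.elim_some]
        have hex : ∃ s : ↥Sy, em s = em ⟨y k, hmem k hk⟩ := ⟨_, rfl⟩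
        rw [hc]
        dsimp only
        rw [dif_pos hex]
        have := em.injective hex.choose_spec
        rw [this]
    exact Set.mem_iUnion₂.mpr ⟨σ, Finset.mem_univ σ, this⟩
  obtain ⟨σ, _, hσsub⟩ := convex_subset_union Finset.univ
    ⟨fun _ => none, Finset.mem_univ _⟩ W (posHull Gset) (posHull_convex Gset) hcover
  have hspan : Submodule.span ℝ Gset ≤ W σ :=
    Submodule.span_le.mpr ((subset_posHull Gset).trans hσsub)
  calc Module.finrank ℝ (Submodule.span ℝ Gset) ≤ Module.finrank ℝ (W σ) :=
        Submodule.finrank_mono hspan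
    _ ≤ Module.finrank ℝ (Fin e → ℝ) := LinearMap.finrank_range_le _
    _ = e := by simp [Module.finrank_pi]

open MeasureTheory

lemma key_direction {n N : ℕ} (G : Fin N → Set (Fin n → ℝ)) (F : Set (Fin n → ℝ))
    (hF : F = ⋃ i, posHull (G i)) (htc : TropConvex F) (x : Fin n → ℝ) (hx : x ∈ F) :
    ∃ i : Fin N, ((Finset.univ.image x).filter (· ≠ 0)).card ≤
      Module.finrank ℝ (Submodule.span ℝ (G i)) := by
  classical
  have hsmul : ∀ t : ℝ, 0 ≤ t → ∀ y ∈ F, t • y ∈ F := by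
    intro t ht y hy
    rw [hF] at hy ⊢
    obtain ⟨s, ⟨i, rfl⟩, hs⟩ := hy
    exact Set.mem_iUnion.mpr ⟨i, posHull_smul_mem ht hs⟩
  set Fv : Finset ℝ := (Finset.univ.image x).filter (· ≠ 0) with hFv
  have hxi0 : ∃ i : Fin N, x ∈ posHull (G i) := by
    rw [hF] at hx; simpa using hx
  by_cases hFvne : Fv.Nonempty
  swap
  · obtain ⟨i, _⟩ := hxi0
    exact ⟨i, by rw [Finset.not_nonempty_iff_eq_empty.mp hFvne]; simp⟩
  -- the gap δ
  set Fv0 : Finset ℝ := insert 0 Fv with hFv0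
  have hFvprop : ∀ c ∈ Fv, c ≠ 0 ∧ ∃ k, x k = c := by
    intro c hc
    rw [hFv, Finset.mem_filter, Finset.mem_image] at hc
    obtain ⟨⟨k, _, hk⟩, hne⟩ := hc
    exact ⟨hne, k, hk⟩
  have hoff : Fv0.offDiag.Nonempty := by
    obtain ⟨c, hc⟩ := hFvne
    exact ⟨(0, c), Finset.mem_offDiag.mpr ⟨Finset.mem_insert_self _ _,
      Finset.mem_insert_of_mem hc, fun h => (hFvprop c hc).1 h.symm⟩⟩
  set δ : ℝ := (Fv0.offDiag.inf' hoff (fun p => |p.1 - p.2|)) / 2 with hδ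
  have hδpos : 0 < δ := by
    rw [hδ]
    apply div_pos _ two_pos
    rw [Finset.lt_inf'_iff]
    rintro ⟨a, b⟩ hab
    rw [Finset.mem_offDiag] at hab
    exact abs_pos.mpr (sub_ne_zero.mpr hab.2.2)
  have hgap : ∀ a ∈ Fv0, ∀ b ∈ Fv0, a ≠ b → 2 * δ ≤ |a - b| := by
    intro a ha b hb hne
    have hmem : (a, b) ∈ Fv0.offDiag := Finset.mem_offDiag.mpr ⟨ha, hb, hne⟩
    have := Finset.inf'_le (fun p : ℝ × ℝ => |p.1 - p.2|) hmem
    rw [hδ]; linarith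
  have hmemFv0 : ∀ c ∈ Fv, c ∈ Fv0 := fun c hc => Finset.mem_insert_of_mem hc
  have h0Fv0 : (0:ℝ) ∈ Fv0 := Finset.mem_insert_self _ _
  -- basic inequalities for values
  have hposval : ∀ c ∈ Fv, 0 < c → 2 * δ ≤ c := by
    intro c hc h
    have := hgap c (hmemFv0 c hc) 0 h0Fv0 (hFvprop c hc).1
    rwa [sub_zero, abs_of_pos h] at this
  have hnegval : ∀ c ∈ Fv, c < 0 → 2 * δ ≤ -c := by
    intro c hc h
    have := hgap c (hmemFv0 c hc) 0 h0Fv0 (hFvprop c hc).1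
    rwa [sub_zero, abs_of_neg h] at this
  -- the hinge vectors
  set H : ℝ → (Fin n → ℝ) := fun c i => if 0 < c then min (x i) (c - δ)
    else min (x i - (c + δ)) 0 with hH
  set Y : Option ↥Fv → (Fin n → ℝ) := fun j => j.elim x (fun c => H c) with hY
  set Φ := Fintype.linearCombination ℝ Y with hΦ
  -- Step A : positive combinations land in F
  have stepA : ∀ s : Option ↥Fv → ℝ, (∀ j, 0 ≤ s j) → Φ s ∈ F := by
    intro s hs
    set f : ℝ → ℝ := fun c' => s none * c' +
      ∑ c : ↥Fv, s (some c) * (if 0 < (c:ℝ) then min c' ((c:ℝ) - δ)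
        else min (c' - ((c:ℝ) + δ)) 0) with hf
    have hfrep : MinRep f := by
      apply (minRep_linear (hs none)).add
      apply minRep_sum
      intro c _
      by_cases hc : 0 < (c:ℝ)
      · have h1 : (0:ℝ) ≤ (c:ℝ) - δ := by
          have := hposval c c.2 hc; linarith
        have := minRep_min2 (le_refl (0:ℝ)) (mul_nonneg (hs (some c)) h1)
          (hs (some c)) (le_refl (0:ℝ)) (Or.inl rfl)
        convert this using 2 with c'
        rw [if_pos hc, mul_min_of_nonneg _ _ (hs (some c))]
        congr 1 <;> ring
      · have hcneg : (c:ℝ) < 0 := lt_of_le_of_ne (not_lt.mp hc) (hFvprop c c.2).1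
        have h1 : (0:ℝ) ≤ -(s (some c) * ((c:ℝ) + δ)) := by
          have h2 : (c:ℝ) + δ ≤ 0 := by have := hnegval c c.2 hcneg; linarith
          have := mul_nonpos_of_nonneg_of_nonpos (hs (some c)) h2
          linarith
        have := minRep_min2 h1 (le_refl (0:ℝ)) (hs (some c)) (le_refl (0:ℝ)) (Or.inr rfl)
        convert this using 2 with c'
        rw [if_neg hc, mul_min_of_nonneg _ _ (hs (some c))]
        congr 1 <;> ring
    have hmem := minRep_apply_mem htc hsmul hx hfrep
    have heq : (fun i => f (x i)) = Φ s := by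
      funext i
      rw [hΦ, Fintype.linearCombination_apply, Finset.sum_apply, Fintype.sum_option]
      simp only [Pi.smul_apply, smul_eq_mul]
      rfl
    rwa [heq] at hmem
  -- Step B : some cone's span contains the whole range of Φ
  have stepB : ∃ i : Fin N, ∀ v, Φ v ∈ Submodule.span ℝ (G i) := by
    set O : Set (Option ↥Fv → ℝ) := {s | ∀ j, 0 < s j} with hO
    set A : Fin N → Set (Option ↥Fv → ℝ) :=
      fun i => O ∩ Φ ⁻¹' (posHull (G i)) with hA
    have hcover : O ⊆ ⋃ i, A i := by
      intro s hs
      have hsF : Φ s ∈ F := stepA s (fun j => (hs j).le)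
      rw [hF] at hsF
      obtain ⟨t, ⟨i, rfl⟩, hmem⟩ := hsF
      exact Set.mem_iUnion.mpr ⟨i, hs, hmem⟩
    have hN0 : ∃ i, affineSpan ℝ (A i) = ⊤ := by
      by_contra hcon
      push_neg at hcon
      have hzero : ∀ i, volume (A i) = 0 := by
        intro i
        refine measure_mono_null ?_ (Measure.addHaar_affineSubspace volume _ (hcon i))
        exact subset_affineSpan ℝ (A i)
      have hOzero : volume O = 0 := by
        have h1 : volume O ≤ ∑' i, volume (A i) :=
          le_trans (measure_mono hcover) (measure_iUnion_le A)
        simpa [hzero] using h1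
      have hOopen : IsOpen O := by
        have : O = Set.pi Set.univ (fun _ : Option ↥Fv => Set.Ioi (0:ℝ)) := by
          ext s; simp [hO, Set.mem_pi]
        rw [this]
        exact isOpen_set_pi Set.finite_univ (fun _ _ => isOpen_Ioi)
      have hOne : O.Nonempty := ⟨fun _ => 1, fun _ => one_pos⟩
      exact (hOopen.measure_pos volume hOne).ne' hOzero
    obtain ⟨i, hi⟩ := hN0
    refine ⟨i, ?_⟩
    have hdir : vectorSpan ℝ (A i) = ⊤ := by
      rw [← direction_affineSpan, hi]
      exact AffineSubspace.direction_top ℝ _ _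
    set P : Submodule ℝ (Option ↥Fv → ℝ) := Submodule.comap Φ (Submodule.span ℝ (G i))
      with hP
    have hsub : (A i -ᵥ A i : Set (Option ↥Fv → ℝ)) ⊆ P := by
      rintro v ⟨a, ha, b, hb, rfl⟩
      show Φ (a -ᵥ b) ∈ Submodule.span ℝ (G i)
      rw [vsub_eq_sub, map_sub]
      exact Submodule.sub_mem _ (posHull_subset_span _ ha.2) (posHull_subset_span _ hb.2)
    have htop : (⊤ : Submodule ℝ (Option ↥Fv → ℝ)) ≤ P := by
      rw [← hdir, vectorSpan_def]
      exact Submodule.span_le.mpr hsub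
    intro v
    exact htop (Submodule.mem_top)
  obtain ⟨i, hΦspan⟩ := stepB
  refine ⟨i, ?_⟩
  set u : ↥Fv → (Fin n → ℝ) := fun c => if 0 < (c:ℝ) then H c - x else H c with hu
  have humem : ∀ c, u c ∈ Submodule.span ℝ (G i) := by
    intro c
    have h1 : H (c:ℝ) = Φ (Pi.single (some c) 1) := by
      rw [hΦ, Fintype.linearCombination_apply_single, one_smul, hY]
      rfl
    have h2 : x = Φ (Pi.single none 1) := by
      rw [hΦ, Fintype.linearCombination_apply_single, one_smul, hY]
      rfl
    rw [hu]
    dsimp only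
    split
    · rw [h1, h2]
      exact Submodule.sub_mem _ (hΦspan _) (hΦspan _)
    · rw [h1]
      exact hΦspan _
  have hindep : LinearIndependent ℝ u := by
    rw [Fintype.linearIndependent_iff]
    intro g hg
    by_contra hcon
    push_neg at hcon
    obtain ⟨c1, hc1⟩ := hcon
    set T := Finset.univ.filter (fun c : ↥Fv => g c ≠ 0) with hT
    have hTne : T.Nonempty := ⟨c1, by simp [hT, hc1]⟩
    obtain ⟨c₀, hc₀T, hc₀min⟩ := Finset.exists_min_image T (fun c => |(c:ℝ)|) hTne
    have hgc₀ : g c₀ ≠ 0 := by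
      have := Finset.mem_filter.mp hc₀T
      exact this.2
    obtain ⟨k₀, hk₀⟩ := (hFvprop _ c₀.2).2
    have heval : ∀ c : ↥Fv, c ≠ c₀ → g c ≠ 0 → u c k₀ = 0 := by
      intro c hne hgne
      have hmin : |(c₀:ℝ)| ≤ |(c:ℝ)| :=
        hc₀min c (Finset.mem_filter.mpr ⟨Finset.mem_univ _, hgne⟩)
      have hcoe : (c₀:ℝ) ≠ (c:ℝ) := fun h => hne (Subtype.coe_injective h.symm)
      rw [hu]
      dsimp only
      split
      · next hpos =>
        have hle : (c₀:ℝ) < (c:ℝ) := by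
          have h1 : (c₀:ℝ) ≤ |(c₀:ℝ)| := le_abs_self _
          have h2 : |(c:ℝ)| = (c:ℝ) := abs_of_pos hpos
          rcases lt_or_eq_of_le (by linarith : (c₀:ℝ) ≤ (c:ℝ)) with h | h
          · exact h
          · exact absurd h hcoe
        have hgapc := hgap _ (hmemFv0 _ c₀.2) _ (hmemFv0 _ c.2) hcoe
        rw [abs_of_neg (by linarith : (c₀:ℝ) - (c:ℝ) < 0)] at hgapc
        rw [hH]
        dsimp only [Pi.sub_apply]
        rw [if_pos hpos, hk₀, min_eq_left (by linarith), sub_self]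
      · next hpos =>
        have hcneg : (c:ℝ) < 0 := lt_of_le_of_ne (not_lt.mp hpos) (hFvprop _ c.2).1
        have hge : (c:ℝ) < (c₀:ℝ) := by
          have h1 : -(c₀:ℝ) ≤ |(c₀:ℝ)| := neg_le_abs _
          have h2 : |(c:ℝ)| = -(c:ℝ) := abs_of_neg hcneg
          rcases lt_or_eq_of_le (by linarith : (c:ℝ) ≤ (c₀:ℝ)) with h | h
          · exact h
          · exact absurd h.symm hcoe
        have hgapc := hgap _ (hmemFv0 _ c₀.2) _ (hmemFv0 _ c.2) hcoe
        rw [abs_of_pos (by linarith : (0:ℝ) < (c₀:ℝ) - (c:ℝ))] at hgapc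
        rw [hH]
        dsimp only
        rw [if_neg hpos, hk₀]
        exact min_eq_right (by linarith)
    have hdiag : u c₀ k₀ = -δ := by
      rw [hu]
      dsimp only
      split
      · next hpos =>
        rw [hH]
        dsimp only [Pi.sub_apply]
        rw [if_pos hpos, hk₀, min_eq_right (by linarith)]
        ring
      · next hpos =>
        rw [hH]
        dsimp only
        rw [if_neg hpos, hk₀, min_eq_left (by linarith)]
        ring
    have hsum : ∑ c : ↥Fv, g c * u c k₀ = 0 := by
      have := congrFun hg k₀
      rw [Finset.sum_apply] at this
      simpa using this
    have hsingle : ∑ c : ↥Fv, g c * u c k₀ = g c₀ * u c₀ k₀ := by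
      apply Finset.sum_eq_single
      · intro b _ hb
        by_cases hgb : g b = 0
        · rw [hgb, zero_mul]
        · rw [heval b hb hgb, mul_zero]
      · intro h
        exact absurd (Finset.mem_univ _) h
    rw [hsingle, hdiag] at hsum
    have : g c₀ = 0 := by
      rcases mul_eq_zero.mp hsum with h | h
      · exact h
      · exact absurd h (by linarith)
    exact hgc₀ this
  have hle : Submodule.span ℝ (Set.range u) ≤ Submodule.span ℝ (G i) :=
    Submodule.span_le.mpr (by rintro _ ⟨c, rfl⟩; exact humem c)
  calc Fv.card = Fintype.card ↥Fv := (Fintype.card_coe Fv).symm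
    _ = Module.finrank ℝ (Submodule.span ℝ (Set.range u)) := (finrank_span_eq_card hindep).symm
    _ ≤ Module.finrank ℝ (Submodule.span ℝ (G i)) := Submodule.finrank_mono hle

theorem dim_tropically_convex_fan (n N : ℕ) (hN : 1 ≤ N)
    (G : Fin N → Set (Fin n → ℝ)) (hGfin : ∀ i, (G i).Finite)
    (F : Set (Fin n → ℝ)) (hF : F = ⋃ i, posHull (G i))
    (htc : TropConvex F) :
    (Finset.univ.sup fun i : Fin N => Module.finrank ℝ (Submodule.span ℝ (G i))) =
      sSup {d : ℕ | ∃ x ∈ F, d = {c : ℝ | c ≠ 0 ∧ ∃ k, x k = c}.ncard} := by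
  classical
  have hncard : ∀ y : Fin n → ℝ, {c : ℝ | c ≠ 0 ∧ ∃ k, y k = c}.ncard =
      ((Finset.univ.image y).filter (· ≠ 0)).card := by
    intro y
    rw [← Set.ncard_coe_finset]
    congr 1
    ext c
    simp only [Finset.coe_filter, Finset.mem_image, Finset.mem_univ, true_and,
      Set.mem_setOf_eq]
    tauto
  set D := Finset.univ.sup fun i : Fin N => Module.finrank ℝ (Submodule.span ℝ (G i)) with hD
  set Sset := {d : ℕ | ∃ x ∈ F, d = {c : ℝ | c ≠ 0 ∧ ∃ k, x k = c}.ncard} with hSset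
  have hbdd : BddAbove Sset := by
    refine ⟨n, fun d hd => ?_⟩
    obtain ⟨y, _, rfl⟩ := hd
    rw [hncard]
    calc ((Finset.univ.image y).filter (· ≠ 0)).card
        ≤ (Finset.univ.image y).card := Finset.card_filter_le _ _
      _ ≤ (Finset.univ : Finset (Fin n)).card := Finset.card_image_le
      _ = n := by simp
  have h0F : (0 : Fin n → ℝ) ∈ F := by
    rw [hF]
    exact Set.mem_iUnion.mpr ⟨⟨0, hN⟩, posHull_zero_mem _⟩
  have hne : Sset.Nonempty := by
    refine ⟨0, 0, h0F, ?_⟩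
    have : {c : ℝ | c ≠ 0 ∧ ∃ k, (0 : Fin n → ℝ) k = c} = ∅ := by
      ext c
      simp only [Set.mem_setOf_eq, Set.mem_empty_iff_false, iff_false, not_and]
      rintro hc ⟨k, hk⟩
      exact hc hk.symm
    rw [this, Set.ncard_empty]
  apply le_antisymm
  · by_contra hlt
    push_neg at hlt
    obtain ⟨i₀, _, hi₀⟩ := Finset.exists_mem_eq_sup (Finset.univ : Finset (Fin N))
      ⟨⟨0, hN⟩, Finset.mem_univ _⟩
      (fun i : Fin N => Module.finrank ℝ (Submodule.span ℝ (G i)))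
    have hbound : ∀ y ∈ posHull (G i₀),
        ((Finset.univ.image y).filter (· ≠ 0)).card ≤ D - 1 := by
      intro y hy
      have hyF : y ∈ F := by
        rw [hF]; exact Set.mem_iUnion.mpr ⟨i₀, hy⟩
      have hmem : ((Finset.univ.image y).filter (· ≠ 0)).card ∈ Sset :=
        ⟨y, hyF, (hncard y).symm⟩
      have hle := le_csSup hbdd hmem
      omega
    have hfr := span_finrank_le (G i₀) hbound
    rw [← hi₀, ← hD] at hfr
    omega
  · apply csSup_le hne
    rintro d ⟨y, hyF, rfl⟩
    rw [hncard]
    obtain ⟨i, hle⟩ := key_direction G F hF htc y hyF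
    rw [hD]
    exact hle.trans (Finset.le_sup (f := fun i : Fin N =>
      Module.finrank ℝ (Submodule.span ℝ (G i))) (Finset.mem_univ i))
end

section
/- Let a ∈ ℝ^n with a ≠ 0 and let H = {x ∈ ℝ^n : Σ_{k=1}^n a_k x_k ≥ 0} be the corresponding closed linear halfspace. Then for every j ∈ {0, 1, …, n}, either H + S_j = H or H + S_j = ℝ^n (where + is Minkowski sum). Moreover, H + S_j = H exactly when S_j ⊆ H. -/
open Pointwise

theorem halfspace_add_sector (n : ℕ) (a : Fin n → ℝ) (ha : a ≠ 0)
    (H : Set (Fin n → ℝ)) (hH : H = {x | 0 ≤ ∑ k, a k * x k}) :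
    ∀ j : Fin (n + 1),
      (H + sector j = H ∨ H + sector j = Set.univ) ∧
      (H + sector j = H ↔ sector j ⊆ H) := by
  subst hH
  intro j
  set f : (Fin n → ℝ) → ℝ := fun x => ∑ k, a k * x k with hf
  have hf_add : ∀ x y, f (x + y) = f x + f y := by
    intro x y
    simp [hf, Pi.add_apply, mul_add, Finset.sum_add_distrib]
  have hf_smul : ∀ (t : ℝ) (x : Fin n → ℝ), f (t • x) = t * f x := by
    intro t x
    simp only [hf, Pi.smul_apply, smul_eq_mul, Finset.mul_sum]
    exact Finset.sum_congr rfl fun k _ => by ring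
  have h0H : (0 : Fin n → ℝ) ∈ {x | 0 ≤ f x} := by simp [hf]
  have h0S : (0 : Fin n → ℝ) ∈ sector j := by
    unfold sector
    split <;> simp
  have hSsmul : ∀ (t : ℝ), 0 ≤ t → ∀ s ∈ sector j, t • s ∈ sector j := by
    intro t ht s hs
    unfold sector at *
    split at hs
    · simp only [‹(j : ℕ) = 0›, dif_pos, Set.mem_setOf_eq] at *
      intro i
      exact mul_nonpos_of_nonneg_of_nonpos ht (hs i)
    · simp only [dif_neg ‹¬(j : ℕ) = 0›, Set.mem_setOf_eq] at *
      exact ⟨mul_nonneg ht hs.1, fun i => mul_le_mul_of_nonneg_left (hs.2 i) ht⟩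
  have hsup : {x | 0 ≤ f x} ⊆ {x | 0 ≤ f x} + sector j := by
    intro x hx
    exact ⟨x, hx, 0, h0S, by simp⟩
  by_cases hsub : sector j ⊆ {x | 0 ≤ f x}
  · have heq : {x | 0 ≤ f x} + sector j = {x | 0 ≤ f x} := by
      refine subset_antisymm ?_ hsup
      rintro _ ⟨x, hx, s, hs, rfl⟩
      have hx' : 0 ≤ f x := hx
      have hs' : 0 ≤ f s := hsub hs
      have : (0 : ℝ) ≤ f x + f s := add_nonneg hx' hs'
      simpa [hf_add] using this
    exact ⟨Or.inl heq, ⟨fun _ => hsub, fun _ => heq⟩⟩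
  · obtain ⟨s, hs, hsH⟩ := Set.not_subset.1 hsub
    simp only [Set.mem_setOf_eq, not_le] at hsH
    have huniv : {x | 0 ≤ f x} + sector j = Set.univ := by
      ext y
      simp only [Set.mem_univ, iff_true]
      set t : ℝ := max 0 (f y / f s) with htd
      have ht : 0 ≤ t := le_max_left _ _
      refine ⟨y - t • s, ?_, t • s, hSsmul t ht s hs, by simp⟩
      show 0 ≤ f (y - t • s)
      have h1 : f y / f s ≤ t := le_max_right _ _
      have h2 : t * f s ≤ (f y / f s) * f s :=
        mul_le_mul_of_nonpos_right h1 (le_of_lt hsH)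
      rw [div_mul_cancel₀ _ (ne_of_lt hsH)] at h2
      have hrw : f (y - t • s) = f y - t * f s := by
        have : y - t • s = y + (-t) • s := by
          ext i; simp [sub_eq_add_neg, neg_smul]
        rw [this, hf_add, hf_smul]; ring
      rw [hrw]
      linarith
    refine ⟨Or.inr huniv, ⟨fun heq s' hs' => ?_, fun h => absurd h hsub⟩⟩
    rw [← heq]
    exact ⟨0, h0H, s', hs', by simp⟩
end
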